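/- arXiv:1707.02823 — 6 statements merged into one kernel-verified Lean document; each statement's English description precedes it below -/
import Mathlib

section
/- The group presented as ⟨m, c ∣ m·c·m = c·m⁻¹·c⟩ is isomorphic to the braid group presentation of the trefoil knot group ⟨a, b ∣ a·b·a = b·a·b⟩. -/
/-- Relators for the presentation ⟨m, c ∣ m·c·m = c·m⁻¹·c⟩ of the trefoil
knot group (generator `0` is `m`, generator `1` is `c`). -/
def trefoilRels : Set (FreeGroup (Fin 2)) :=
  {FreeGroup.of 0 * FreeGroup.of 1 * FreeGroup.of 0 *
    (FreeGroup.of 1)⁻¹ * FreeGroup.of 0 * (FreeGroup.of 1)⁻¹}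

/-- Relators for the braid presentation ⟨a, b ∣ a·b·a = b·a·b⟩
(generator `0` is `a`, generator `1` is `b`). -/
def braidRels : Set (FreeGroup (Fin 2)) :=
  {FreeGroup.of 0 * FreeGroup.of 1 * FreeGroup.of 0 *
    (FreeGroup.of 1)⁻¹ * (FreeGroup.of 0)⁻¹ * (FreeGroup.of 1)⁻¹}

namespace TrefoilAux

local notation "G₁" => PresentedGroup trefoilRels
local notation "G₂" => PresentedGroup braidRels

lemma trefoil_rel :
    (PresentedGroup.of 0 : G₁) * .of 1 * .of 0 = .of 1 * (PresentedGroup.of 0)⁻¹ * .of 1 := by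
  rw [← mul_inv_eq_one]
  have e : (PresentedGroup.of 0 : G₁) * .of 1 * .of 0 *
      ((PresentedGroup.of 1 : G₁) * (PresentedGroup.of 0)⁻¹ * .of 1)⁻¹ =
      .of 0 * .of 1 * .of 0 * (PresentedGroup.of 1)⁻¹ * .of 0 * (PresentedGroup.of 1)⁻¹ := by
    group
  rw [e]
  exact (QuotientGroup.eq_one_iff _).mpr (Subgroup.subset_normalClosure rfl)

lemma braid_rel :
    (PresentedGroup.of 0 : G₂) * .of 1 * .of 0 = .of 1 * .of 0 * .of 1 := by
  rw [← mul_inv_eq_one]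
  have e : (PresentedGroup.of 0 : G₂) * .of 1 * .of 0 *
      ((PresentedGroup.of 1 : G₂) * .of 0 * .of 1)⁻¹ =
      .of 0 * .of 1 * .of 0 * (PresentedGroup.of 1)⁻¹ * (PresentedGroup.of 0)⁻¹ *
        (PresentedGroup.of 1)⁻¹ := by
    group
  rw [e]
  exact (QuotientGroup.eq_one_iff _).mpr (Subgroup.subset_normalClosure rfl)

/-- images of m, c in G₂ : m ↦ b, c ↦ a·b·a -/
def fFun : Fin 2 → G₂ := ![.of 1, .of 0 * .of 1 * .of 0]

/-- images of a, b in G₁ : a ↦ c⁻¹·m·c, b ↦ m -/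
def gFun : Fin 2 → G₁ :=
  ![(PresentedGroup.of 1)⁻¹ * .of 0 * .of 1, .of 0]

/-- Key consequence of the braid relation. -/
lemma key_braid {G : Type*} [Group G] {a b : G} (h : a * b * a = b * a * b) :
    b * (a * b * a) * b = (a * b * a) * b⁻¹ * (a * b * a) := by
  calc b * (a * b * a) * b = (b * a * b) * (a * b) := by group
    _ = (a * b * a) * (a * b) := by rw [← h]
    _ = (a * b * a) * b⁻¹ * (b * a * b) := by group
    _ = (a * b * a) * b⁻¹ * (a * b * a) := by rw [← h]

/-- Key consequences of the trefoil relation. -/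
lemma key_trefoil {G : Type*} [Group G] {m c : G} (h : m * c * m = c * m⁻¹ * c) :
    (c⁻¹ * m * c) * m * (c⁻¹ * m * c) = c := by
  calc (c⁻¹ * m * c) * m * (c⁻¹ * m * c)
      = c⁻¹ * (m * c * m) * c⁻¹ * (m * c) := by group
    _ = c⁻¹ * (c * m⁻¹ * c) * c⁻¹ * (m * c) := by rw [h]
    _ = c := by group

lemma key_trefoil' {G : Type*} [Group G] {m c : G} (h : m * c * m = c * m⁻¹ * c) :
    m * (c⁻¹ * m * c) * m = c := by
  calc m * (c⁻¹ * m * c) * m = m * c⁻¹ * (m * c * m) := by group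
    _ = m * c⁻¹ * (c * m⁻¹ * c) := by rw [h]
    _ = c := by group

lemma fRel : ∀ r ∈ trefoilRels, FreeGroup.lift fFun r = 1 := by
  intro r hr
  rw [trefoilRels, Set.mem_singleton_iff] at hr
  subst hr
  simp only [map_mul, map_inv, FreeGroup.lift_apply_of, fFun,
    Matrix.cons_val_zero, Matrix.cons_val_one, Matrix.head_cons]
  set a := (PresentedGroup.of 0 : G₂)
  set b := (PresentedGroup.of 1 : G₂)
  have h2 := key_braid braid_rel
  -- goal : b * (a*b*a) * b * (a*b*a)⁻¹ * b * (a*b*a)⁻¹ = 1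
  have e : b * (a * b * a) * b * (a * b * a)⁻¹ * b * (a * b * a)⁻¹ =
      (b * (a * b * a) * b) * ((a * b * a) * b⁻¹ * (a * b * a))⁻¹ := by group
  rw [e, h2, mul_inv_cancel]

lemma gRel : ∀ r ∈ braidRels, FreeGroup.lift gFun r = 1 := by
  intro r hr
  rw [braidRels, Set.mem_singleton_iff] at hr
  subst hr
  simp only [map_mul, map_inv, FreeGroup.lift_apply_of, gFun,
    Matrix.cons_val_zero, Matrix.cons_val_one, Matrix.head_cons]
  set m := (PresentedGroup.of 0 : G₁)
  set c := (PresentedGroup.of 1 : G₁)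
  set A := c⁻¹ * m * c with hA
  -- goal : A * m * A * m⁻¹ * A⁻¹ * m⁻¹ = 1
  have h3 : A * m * A = m * A * m := by
    rw [hA, key_trefoil trefoil_rel, key_trefoil' trefoil_rel]
  have e : A * m * A * m⁻¹ * A⁻¹ * m⁻¹ =
      (A * m * A) * (m * A * m)⁻¹ := by group
  rw [e, h3, mul_inv_cancel]

def φ : G₁ →* G₂ := PresentedGroup.toGroup fRel
def ψ : G₂ →* G₁ := PresentedGroup.toGroup gRel

lemma comp_ψφ : ψ.comp φ = MonoidHom.id G₁ := by
  apply PresentedGroup.ext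
  intro x
  fin_cases x
  · -- m ↦ b ↦ m
    show ψ (φ (.of 0)) = .of 0
    simp [φ, ψ, fFun, gFun]
  · -- c ↦ aba ↦ A*m*A = c
    show ψ (φ (.of 1)) = .of 1
    simp only [φ, ψ,
      PresentedGroup.toGroup.of, fFun, Matrix.cons_val_one, Matrix.head_cons,
      map_mul, Matrix.cons_val_zero, gFun]
    exact key_trefoil trefoil_rel

lemma comp_φψ : φ.comp ψ = MonoidHom.id G₂ := by
  apply PresentedGroup.ext
  intro x
  fin_cases x
  · -- a ↦ c⁻¹mc ↦ (aba)⁻¹ b (aba) = a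
    show φ (ψ (.of 0)) = .of 0
    simp only [φ, ψ,
      PresentedGroup.toGroup.of, gFun, Matrix.cons_val_zero,
      map_mul, map_inv, Matrix.cons_val_one, Matrix.head_cons, fFun]
    set a := (PresentedGroup.of 0 : G₂)
    set b := (PresentedGroup.of 1 : G₂)
    have h := braid_rel
    -- (a*b*a)⁻¹ * b * (a*b*a) = a
    have key : b * (a * b * a) = (a * b * a) * a := by
      calc b * (a * b * a) = (b * a * b) * a := by group
        _ = (a * b * a) * a := by rw [← h]
    calc (a * b * a)⁻¹ * b * (a * b * a)
        = (a * b * a)⁻¹ * (b * (a * b * a)) := by group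
      _ = (a * b * a)⁻¹ * ((a * b * a) * a) := by rw [key]
      _ = a := by group
  · show φ (ψ (.of 1)) = .of 1
    simp [φ, ψ, fFun, gFun]

end TrefoilAux

theorem trefoil_banchoff_iso_braid :
    Nonempty (PresentedGroup trefoilRels ≃* PresentedGroup braidRels) :=
  ⟨MonoidHom.toMulEquiv TrefoilAux.φ TrefoilAux.ψ TrefoilAux.comp_ψφ TrefoilAux.comp_φψ⟩
end

section
/- The group ⟨m, c ∣ m·c·m = c·m⁻¹·c⟩ is isomorphic to the torus-knot presentation ⟨x, y ∣ x² = y³⟩ of the trefoil knot group. -/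
/-- Relators for the torus-knot presentation ⟨x, y ∣ x² = y³⟩
(`0` is `x`, `1` is `y`). -/
def torusRels : Set (FreeGroup (Fin 2)) :=
  {FreeGroup.of 0 ^ 2 * (FreeGroup.of 1 ^ 3)⁻¹}

private lemma rel_of_mem {α : Type*} {rels : Set (FreeGroup α)} {r : FreeGroup α}
    (h : r ∈ rels) : PresentedGroup.mk rels r = 1 := by
  have : r ∈ Subgroup.normalClosure rels := Subgroup.subset_normalClosure h
  exact (QuotientGroup.eq_one_iff r).mpr this

private lemma torus_rel :
    (PresentedGroup.of 0 : PresentedGroup torusRels) ^ 2 = PresentedGroup.of 1 ^ 3 := by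
  have h := rel_of_mem (rels := torusRels) (r := FreeGroup.of 0 ^ 2 * (FreeGroup.of 1 ^ 3)⁻¹)
    rfl
  have h' : (PresentedGroup.mk torusRels (FreeGroup.of 0)) ^ 2 *
      ((PresentedGroup.mk torusRels (FreeGroup.of 1)) ^ 3)⁻¹ = 1 := by
    simpa using h
  have := mul_inv_eq_one.mp h'
  exact this

private lemma trefoil_rel :
    (PresentedGroup.of 0 : PresentedGroup trefoilRels) * PresentedGroup.of 1 *
      PresentedGroup.of 0 * (PresentedGroup.of 1)⁻¹ * PresentedGroup.of 0 *
      (PresentedGroup.of 1)⁻¹ = 1 := by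
  have h := rel_of_mem (rels := trefoilRels)
    (r := FreeGroup.of 0 * FreeGroup.of 1 * FreeGroup.of 0 *
      (FreeGroup.of 1)⁻¹ * FreeGroup.of 0 * (FreeGroup.of 1)⁻¹) rfl
  simpa [PresentedGroup.of] using h

/-- m ↦ y⁻¹x, c ↦ x -/
private def fwdFun : Fin 2 → PresentedGroup torusRels :=
  ![(PresentedGroup.of 1)⁻¹ * PresentedGroup.of 0, PresentedGroup.of 0]

/-- x ↦ c, y ↦ c m⁻¹ -/
private def bwdFun : Fin 2 → PresentedGroup trefoilRels :=
  ![PresentedGroup.of 1, PresentedGroup.of 1 * (PresentedGroup.of 0)⁻¹]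

private lemma fwd_cond : ∀ r ∈ trefoilRels, FreeGroup.lift fwdFun r = 1 := by
  intro r hr
  rw [trefoilRels, Set.mem_singleton_iff] at hr
  subst hr
  simp only [map_mul, map_inv, FreeGroup.lift_apply_of, fwdFun, Matrix.cons_val_zero,
    Matrix.cons_val_one, Matrix.head_cons]
  set x := (PresentedGroup.of 0 : PresentedGroup torusRels)
  set y := (PresentedGroup.of 1 : PresentedGroup torusRels)
  have e : y⁻¹ * x * x * (y⁻¹ * x) * x⁻¹ * (y⁻¹ * x) * x⁻¹ =
      y⁻¹ * x ^ 2 * y⁻¹ * y⁻¹ := by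
    rw [sq]; group
  rw [e, torus_rel, show (PresentedGroup.of 1 : PresentedGroup torusRels) = y from rfl]
  group

private lemma bwd_cond : ∀ r ∈ torusRels, FreeGroup.lift bwdFun r = 1 := by
  intro r hr
  rw [torusRels, Set.mem_singleton_iff] at hr
  subst hr
  simp only [map_mul, map_inv, map_pow, FreeGroup.lift_apply_of, bwdFun, Matrix.cons_val_zero,
    Matrix.cons_val_one, Matrix.head_cons]
  have h := trefoil_rel
  set m := (PresentedGroup.of 0 : PresentedGroup trefoilRels)
  set c := (PresentedGroup.of 1 : PresentedGroup trefoilRels)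
  have h2 : m * c * m = c * m⁻¹ * c := by
    have e : m * c * m * (c * m⁻¹ * c)⁻¹ = m * c * m * c⁻¹ * m * c⁻¹ := by group
    rw [← mul_inv_eq_one, e]
    exact h
  have key : c ^ 2 = (c * m⁻¹) ^ 3 := by
    have e1 : (c * m⁻¹) ^ 3 = c * m⁻¹ * (c * m⁻¹ * c) * m⁻¹ := by
      rw [pow_succ, pow_succ, pow_one]; group
    rw [e1, ← h2, sq]
    group
  rw [key]
  group

private def fwd : PresentedGroup trefoilRels →* PresentedGroup torusRels :=
  PresentedGroup.toGroup fwd_cond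

private def bwd : PresentedGroup torusRels →* PresentedGroup trefoilRels :=
  PresentedGroup.toGroup bwd_cond

theorem trefoil_banchoff_iso_torus :
    Nonempty (PresentedGroup trefoilRels ≃* PresentedGroup torusRels) := by
  refine ⟨{ toFun := fwd, invFun := bwd, left_inv := ?_, right_inv := ?_,
            map_mul' := map_mul fwd }⟩
  · have : bwd.comp fwd = MonoidHom.id _ := by
      ext i
      fin_cases i <;>
        simp [fwd, bwd, fwdFun, bwdFun, PresentedGroup.toGroup.of]
    intro x
    exact DFunLike.congr_fun this x
  · have : fwd.comp bwd = MonoidHom.id _ := by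
      ext i
      fin_cases i <;>
        simp [fwd, bwd, fwdFun, bwdFun, PresentedGroup.toGroup.of]
    intro x
    exact DFunLike.congr_fun this x
end

section
/- The Sieradski group S(3) = ⟨g₁, g₂, g₃ ∣ g₁ = g₃·g₂, g₂ = g₁·g₃, g₃ = g₂·g₁⟩ is isomorphic to the quaternion group Q₈ of order 8. -/
/-- Relators for the Sieradski group S(n) = ⟨g₀,…,g_{n-1} ∣ gᵢ = gᵢ₋₁·gᵢ₊₁⟩,
indices mod n. -/
def sieradskiRels (n : ℕ) : Set (FreeGroup (ZMod n)) :=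
  {r | ∃ i : ZMod n,
    r = FreeGroup.of i * (FreeGroup.of (i - 1) * FreeGroup.of (i + 1))⁻¹}

/-- The Sieradski group S(n). -/
abbrev Sieradski (n : ℕ) := PresentedGroup (sieradskiRels n)

namespace SieradskiAux

open QuaternionGroup

def fgen : ZMod 3 → QuaternionGroup 2 :=
  fun i => if i = 0 then a 1 else if i = 1 then xa 0 else xa 1

lemma fgen_rel : ∀ r ∈ sieradskiRels 3, FreeGroup.lift fgen r = 1 := by
  rintro r ⟨i, rfl⟩
  simp only [map_mul, map_inv, FreeGroup.lift_apply_of]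
  revert i; decide

def A : Sieradski 3 := PresentedGroup.of 0
def B : Sieradski 3 := PresentedGroup.of 1

lemma hrel (i : ZMod 3) :
    (PresentedGroup.of i : Sieradski 3) =
      PresentedGroup.of (i - 1) * PresentedGroup.of (i + 1) := by
  have h : (PresentedGroup.mk (sieradskiRels 3))
      (FreeGroup.of i * (FreeGroup.of (i - 1) * FreeGroup.of (i + 1))⁻¹) = 1 := by
    apply (QuotientGroup.eq_one_iff _).2
    exact Subgroup.subset_normalClosure ⟨i, rfl⟩
  rw [map_mul, map_inv] at h
  have := mul_inv_eq_one.mp h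
  simpa [PresentedGroup.of, map_mul] using this

lemma hC : (PresentedGroup.of (2 : ZMod 3) : Sieradski 3) = B * A := by
  have h := hrel 2
  have e1 : (2 : ZMod 3) - 1 = 1 := by decide
  have e2 : (2 : ZMod 3) + 1 = 0 := by decide
  rw [e1, e2] at h
  exact h

lemma hABA : A * B * A = B := by
  have h1 := hrel 1
  have e1 : (1 : ZMod 3) - 1 = 0 := by decide
  have e2 : (1 : ZMod 3) + 1 = 2 := by decide
  rw [e1, e2, hC] at h1
  rw [mul_assoc]
  exact h1.symm

lemma hBAB : B * A * B = A := by
  have h0 := hrel 0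
  have e1 : (0 : ZMod 3) - 1 = 2 := by decide
  have e2 : (0 : ZMod 3) + 1 = 1 := by decide
  rw [e1, e2, hC] at h0
  exact h0.symm

lemma hcomm : A * B = B * A⁻¹ := by
  calc A * B = (A * B * A) * A⁻¹ := by group
    _ = B * A⁻¹ := by rw [hABA]

lemma E2 : B * A = A⁻¹ * B := by
  calc B * A = A⁻¹ * (A * B * A) := by group
    _ = A⁻¹ * B := by rw [hABA]

lemma E1 : A * B = B⁻¹ * A := by
  calc A * B = B⁻¹ * (B * A * B) := by group
    _ = B⁻¹ * A := by rw [hBAB]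

lemma hsq : A * A = B * B := by
  have h := hBAB
  rw [E2] at h
  calc A * A = A * (A⁻¹ * B * B) := by rw [h]
    _ = B * B := by group

lemma h5 : A * B = A⁻¹ * B⁻¹ := by
  have h : A⁻¹ * B⁻¹ = B⁻¹ * A := by
    have := congrArg (·⁻¹) E2
    simpa [mul_inv_rev] using this
  rw [E1, h]

lemma hA4 : A ^ 4 = 1 := by
  have h : A * (A * B) * B = 1 := by rw [h5]; group
  calc A ^ 4 = A * A * (A * A) := by
        rw [show (4 : ℕ) = 2 + 2 from rfl, pow_add, sq]
    _ = A * A * (B * B) := by rw [hsq]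
    _ = A * (A * B) * B := by group
    _ = 1 := h

lemma hA3 : A⁻¹ = A ^ 3 := by
  have : A ^ 3 * A = 1 := by rw [show A ^ 3 * A = A ^ 4 by group, hA4]
  exact (eq_inv_of_mul_eq_one_left this).symm

lemma hpowB : ∀ k : ℕ, A ^ k * B = B * A ^ (3 * k) := by
  intro k
  induction k with
  | zero => simp
  | succ n ih =>
    rw [pow_succ, mul_assoc, hcomm, ← mul_assoc, ih, hA3, mul_assoc, ← pow_add]
    congr 1

lemma hmod (m : ℕ) : A ^ m = A ^ (m % 4) := pow_eq_pow_mod m hA4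

lemma pow_val_eq (x : ZMod 4) (m : ℕ) (h : ((m : ℕ) : ZMod 4) = x) :
    A ^ x.val = A ^ m := by
  subst h
  rw [ZMod.val_natCast]
  exact (hmod m).symm

def psiFun : QuaternionGroup 2 → Sieradski 3
  | .a i => A ^ i.val
  | .xa i => B * A ^ i.val

lemma h4 : (4 : ZMod 4) = 0 := by decide

lemma psi_mul : ∀ x y : QuaternionGroup 2, psiFun (x * y) = psiFun x * psiFun y := by
  rintro (i | i) (j | j)
  · show psiFun (a (i + j)) = _
    show A ^ (i + j).val = A ^ i.val * A ^ j.val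
    rw [← pow_add]
    apply pow_val_eq
    push_cast [ZMod.natCast_val, ZMod.cast_id]
    ring
  · show psiFun (xa (j - i)) = _
    show B * A ^ (j - i).val = A ^ i.val * (B * A ^ j.val)
    rw [← mul_assoc, hpowB, mul_assoc, ← pow_add]
    congr 1
    apply pow_val_eq
    push_cast [ZMod.natCast_val, ZMod.cast_id]
    linear_combination i * h4
  · show psiFun (xa (i + j)) = _
    show B * A ^ (i + j).val = B * A ^ i.val * A ^ j.val
    rw [mul_assoc, ← pow_add]
    congr 1
    apply pow_val_eq
    push_cast [ZMod.natCast_val, ZMod.cast_id]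
    ring
  · show psiFun (a ((2 : ℕ) + j - i)) = _
    show A ^ ((2 : ℕ) + j - i).val = B * A ^ i.val * (B * A ^ j.val)
    calc A ^ ((2 : ℕ) + j - i).val = A ^ (2 + (3 * i.val + j.val)) := by
          apply pow_val_eq
          push_cast [ZMod.natCast_val, ZMod.cast_id]
          linear_combination i * h4
      _ = A ^ 2 * (A ^ (3 * i.val) * A ^ j.val) := by rw [pow_add, pow_add]
      _ = (A * A) * (A ^ (3 * i.val) * A ^ j.val) := by rw [sq]
      _ = (B * B) * (A ^ (3 * i.val) * A ^ j.val) := by rw [hsq]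
      _ = B * (A ^ i.val * B) * A ^ j.val := by rw [hpowB]; group
      _ = B * A ^ i.val * (B * A ^ j.val) := by group

def psi : QuaternionGroup 2 →* Sieradski 3 := MonoidHom.mk' psiFun psi_mul

def phi : Sieradski 3 →* QuaternionGroup 2 := PresentedGroup.toGroup fgen_rel

lemma phi_A : phi A = a 1 := by
  show phi (PresentedGroup.of 0) = a 1
  rw [phi, PresentedGroup.toGroup.of]
  rfl

lemma phi_B : phi B = xa 0 := by
  show phi (PresentedGroup.of 1) = xa 0
  rw [phi, PresentedGroup.toGroup.of]
  rfl

lemma left_inv : psi.comp phi = MonoidHom.id _ := by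
  ext i
  fin_cases i
  · show psi (phi A) = A
    rw [phi_A]
    show A ^ (1 : ZMod 4).val = A
    rw [show (1 : ZMod 4).val = 1 from rfl, pow_one]
  · show psi (phi B) = B
    rw [phi_B]
    show B * A ^ (0 : ZMod 4).val = B
    rw [show (0 : ZMod 4).val = 0 from rfl, pow_zero, mul_one]
  · show psi (phi (PresentedGroup.of 2)) = PresentedGroup.of 2
    rw [hC, map_mul, phi_A, phi_B]
    show psiFun (xa 0 * a 1) = B * A
    show psiFun (xa (0 + 1)) = B * A
    show B * A ^ ((0 : ZMod 4) + 1).val = B * A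
    rw [show ((0 : ZMod 4) + 1).val = 1 from rfl, pow_one]

lemma right_inv : phi.comp psi = MonoidHom.id _ := by
  ext x
  rcases x with i | i
  · show phi (A ^ i.val) = a i
    rw [map_pow, phi_A, a_one_pow]
    congr 1
    simp [ZMod.natCast_val, ZMod.cast_id]
  · show phi (B * A ^ i.val) = xa i
    rw [map_mul, map_pow, phi_A, phi_B, a_one_pow, xa_mul_a]
    congr 1
    simp [ZMod.natCast_val, ZMod.cast_id]

end SieradskiAux

/-- S(3) is isomorphic to the quaternion group Q₈ (= QuaternionGroup 2). -/
theorem sieradski_three_iso_quaternion :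
    Nonempty (Sieradski 3 ≃* QuaternionGroup 2) :=
  ⟨SieradskiAux.phi.toMulEquiv SieradskiAux.psi SieradskiAux.left_inv SieradskiAux.right_inv⟩
end

section
/- The Sieradski group S(4) = ⟨g₁, g₂, g₃, g₄ ∣ g₁ = g₄·g₂, g₂ = g₁·g₃, g₃ = g₂·g₄, g₄ = g₃·g₁⟩ is isomorphic to SL₂(ℤ/3). -/
namespace SierAux

abbrev SL2 := Matrix.SpecialLinearGroup (Fin 2) (ZMod 3)

def g (i : ZMod 4) : Sieradski 4 := PresentedGroup.of i

lemma grel (i : ZMod 4) : g i = g (i - 1) * g (i + 1) := by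
  have h : PresentedGroup.mk (sieradskiRels 4)
      (FreeGroup.of i * (FreeGroup.of (i - 1) * FreeGroup.of (i + 1))⁻¹) = 1 := by
    apply (QuotientGroup.eq_one_iff _).2
    exact Subgroup.subset_normalClosure ⟨i, rfl⟩
  rw [map_mul, map_inv, mul_inv_eq_one, map_mul] at h
  exact h

lemma r0 : g 0 = g 3 * g 1 := by
  have h := grel 0
  rwa [show (0 : ZMod 4) - 1 = 3 by decide, show (0 : ZMod 4) + 1 = 1 by decide] at h
lemma r1 : g 1 = g 0 * g 2 := by
  have h := grel 1
  rwa [show (1 : ZMod 4) - 1 = 0 by decide, show (1 : ZMod 4) + 1 = 2 by decide] at h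
lemma r2 : g 2 = g 1 * g 3 := by
  have h := grel 2
  rwa [show (2 : ZMod 4) - 1 = 1 by decide, show (2 : ZMod 4) + 1 = 3 by decide] at h
lemma r3 : g 3 = g 2 * g 0 := by
  have h := grel 3
  rwa [show (3 : ZMod 4) - 1 = 2 by decide, show (3 : ZMod 4) + 1 = 0 by decide] at h

lemma e2 : g 2 = (g 0)⁻¹ * g 1 := by rw [r1]; group
lemma e3 : g 3 = (g 0)⁻¹ * g 1 * g 0 := by rw [r3, e2]

lemma htop : Subgroup.closure ({g 0, g 1} : Set (Sieradski 4)) = ⊤ := by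
  rw [eq_top_iff, ← PresentedGroup.closure_range_of (sieradskiRels 4)]
  refine (Subgroup.closure_le _).2 ?_
  rintro x ⟨i, rfl⟩
  have h0 : g 0 ∈ Subgroup.closure ({g 0, g 1} : Set (Sieradski 4)) :=
    Subgroup.subset_closure (by simp)
  have h1 : g 1 ∈ Subgroup.closure ({g 0, g 1} : Set (Sieradski 4)) :=
    Subgroup.subset_closure (by simp)
  have hi : ∀ j : ZMod 4, j = 0 ∨ j = 1 ∨ j = 2 ∨ j = 3 := by decide
  show g i ∈ _
  rcases hi i with rfl | rfl | rfl | rfl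
  · exact h0
  · exact h1
  · rw [e2]; exact mul_mem (inv_mem h0) h1
  · rw [e3]; exact mul_mem (mul_mem (inv_mem h0) h1) h0

lemma h4 : g 0 * (g 0 * (g 0)) = (g 0)⁻¹ * ((g 0)⁻¹ * ((g 0)⁻¹)) := by
  calc g 0 * (g 0 * (g 0))
    _ = g 1 * ((g 2)⁻¹ * (g 0 * ((g 1)⁻¹ * (g 0 * (g 2 * (g 0)))))) := by rw [r1]; group
    _ = g 1 * ((g 2)⁻¹ * (g 0 * ((g 1)⁻¹ * ((g 3)⁻¹ * (g 2 * (g 0 * (g 0 * (g 3)))))))) := by rw [r3]; group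
    _ = g 1 * (g 3 * ((g 1)⁻¹ * ((g 3)⁻¹ * (g 0 * (g 1 * (g 3 * (g 1 * (g 3)))))))) := by rw [r0]; group
    _ = g 2 * ((g 1)⁻¹ * ((g 3)⁻¹ * (g 0 * (g 2 * ((g 1)⁻¹ * (g 2 * ((g 3)⁻¹ * (g 2)))))))) := by rw [r2]; group
    _ = (g 0)⁻¹ * ((g 3)⁻¹ * (g 2 * ((g 3)⁻¹ * (g 2)))) := by rw [r1]; group
    _ = (g 0)⁻¹ * ((g 0)⁻¹ * ((g 0)⁻¹)) := by rw [r3]; group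

lemma sA0 : g 0 * (1) = g 0 := by
  group

lemma sA1 : g 0 * (g 0) = g 0 * (g 0) := by
  group

lemma sA2 : g 0 * (g 1) = g 0 * (g 1) := by
  group

lemma sA3 : g 0 * (g 0 * (g 0)) = g 0 * (g 0 * (g 0)) := by
  group

lemma sA4 : g 0 * (g 1 * (g 0)) = g 1 * (g 1) := by
  calc g 0 * (g 1 * (g 0))
    _ = g 1 * ((g 2)⁻¹ * (g 1 * (g 0))) := by rw [r1]; group
    _ = g 1 * ((g 2)⁻¹ * (g 1 * (g 3 * (g 1)))) := by rw [r0]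
    _ = g 1 * (g 1) := by rw [r2]; group

lemma sA5 : g 0 * (g 0 * (g 1)) = g 0 * (g 0 * (g 1)) := by
  group

lemma sA6 : g 0 * (g 1 * (g 1)) = g 0 * (g 1 * (g 1)) := by
  group

lemma sA7 : g 0 * (g 0 * (g 0 * (g 0))) = g 0 * (g 0 * (g 0 * (g 0))) := by
  group

lemma sA8 : g 0 * (g 1 * (g 0 * (g 0))) = g 1 * (g 1 * (g 0)) := by
  calc g 0 * (g 1 * (g 0 * (g 0)))
    _ = g 1 * ((g 2)⁻¹ * (g 1 * (g 0 * (g 0)))) := by rw [r1]; group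
    _ = g 1 * ((g 2)⁻¹ * (g 1 * (g 3 * (g 1 * (g 0))))) := by rw [r0]; group
    _ = g 1 * (g 1 * (g 0)) := by rw [r2]; group

lemma sA9 : g 0 * (g 1 * (g 1 * (g 0))) = g 0 * (g 1 * (g 1 * (g 0))) := by
  group

lemma sA10 : g 0 * (g 0 * (g 0 * (g 1))) = g 1 * (g 0 * (g 0 * (g 0))) := by
  calc g 0 * (g 0 * (g 0 * (g 1)))
    _ = g 0 * (g 2 * (g 0 * ((g 3)⁻¹ * (g 0 * ((g 2)⁻¹ * (g 3 * (g 1))))))) := by rw [r3]; group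
    _ = g 0 * (g 2 * (g 3 * (g 1 * (g 1 * ((g 2)⁻¹ * (g 3 * (g 1))))))) := by rw [r0]; group
    _ = g 0 * (g 2 * (g 0 * (g 1 * ((g 2)⁻¹ * (g 0))))) := by rw [r0]; group
    _ = g 1 * (g 0 * (g 0 * (g 0))) := by rw [r1]; group

lemma sA11 : g 0 * (g 0 * (g 1 * (g 1))) = g 0 * (g 0 * (g 1 * (g 1))) := by
  group

lemma sA12 : g 0 * (g 0 * (g 0 * (g 0 * (g 0)))) = g 0 * (g 0 * (g 0 * (g 0 * (g 0)))) := by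
  group

lemma sA13 : g 0 * (g 1 * (g 0 * (g 0 * (g 0)))) = g 1 * (g 1 * (g 0 * (g 0))) := by
  calc g 0 * (g 1 * (g 0 * (g 0 * (g 0))))
    _ = g 1 * ((g 2)⁻¹ * (g 1 * (g 0 * (g 0 * (g 0))))) := by rw [r1]; group
    _ = g 1 * ((g 2)⁻¹ * (g 1 * (g 3 * (g 1 * (g 0 * (g 0)))))) := by rw [r0]; group
    _ = g 1 * (g 1 * (g 0 * (g 0))) := by rw [r2]; group

lemma sA14 : g 0 * (g 1 * (g 1 * (g 0 * (g 0)))) = g 0 * (g 1 * (g 1 * (g 0 * (g 0)))) := by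
  group

lemma sA15 : g 0 * (g 0 * (g 1 * (g 1 * (g 0)))) = g 0 * (g 0 * (g 1 * (g 1 * (g 0)))) := by
  group

lemma sA16 : g 0 * (g 1 * (g 0 * (g 0 * (g 1)))) = g 1 * (g 0 * (g 0)) := by
  calc g 0 * (g 1 * (g 0 * (g 0 * (g 1))))
    _ = g 0 * (g 2 * ((g 3)⁻¹ * (g 0 * (g 0 * (g 1))))) := by rw [r2]; group
    _ = g 0 * (g 2 * ((g 3)⁻¹ * (g 0 * ((g 2)⁻¹ * (g 3 * (g 1)))))) := by rw [r3]; group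
    _ = g 1 * ((g 3)⁻¹ * (g 0 * ((g 1)⁻¹ * (g 0 * (g 3 * (g 1)))))) := by rw [r1]; group
    _ = g 1 * (g 0 * (g 0)) := by rw [r0]; group

lemma sA17 : g 0 * (g 0 * (g 0 * (g 1 * (g 1)))) = g 1 * (g 1 * (g 0 * (g 0 * (g 0)))) := by
  calc g 0 * (g 0 * (g 0 * (g 1 * (g 1))))
    _ = g 0 * (g 3 * (g 1 * (g 3 * (g 1 * ((g 3)⁻¹ * (g 0 * (g 1))))))) := by rw [r0]; group
    _ = g 0 * (g 3 * (g 2 * (g 1 * ((g 2)⁻¹ * (g 1 * (g 0 * (g 1))))))) := by rw [r2]; group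
    _ = g 0 * (g 3 * (g 2 * (g 0 * (g 0 * (g 2 * (g 0 * (g 1))))))) := by rw [r1]; group
    _ = g 0 * (g 2 * (g 0 * (g 2 * (g 0 * (g 0 * (g 3 * (g 1))))))) := by rw [r3]; group
    _ = g 1 * (g 1 * (g 0 * (g 0 * (g 3 * (g 1))))) := by rw [r1]; group
    _ = g 1 * (g 1 * (g 0 * (g 0 * (g 0)))) := by rw [r0]

lemma sA18 : g 0 * (g 0 * (g 0 * (g 0 * (g 0 * (g 0))))) = 1 := by
  calc g 0 * (g 0 * (g 0 * (g 0 * (g 0 * (g 0)))))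
    _ = (g 0 * (g 0 * (g 0))) * (g 0 * (g 0 * (g 0))) := by group
    _ = ((g 0)⁻¹ * ((g 0)⁻¹ * ((g 0)⁻¹))) * (g 0 * (g 0 * (g 0))) := congrArg (fun z => z * (g 0 * (g 0 * (g 0)))) h4
    _ = 1 := by group

lemma sA19 : g 0 * (g 1 * (g 1 * (g 0 * (g 0 * (g 0))))) = g 1 * (g 1 * (g 0 * (g 0 * (g 1)))) := by
  calc g 0 * (g 1 * (g 1 * (g 0 * (g 0 * (g 0)))))
    _ = g 0 * (g 2 * ((g 3)⁻¹ * (g 1 * (g 0 * (g 0 * (g 0)))))) := by rw [r2]; group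
    _ = g 1 * ((g 3)⁻¹ * (g 0 * (g 2 * (g 0 * (g 1 * ((g 2)⁻¹ * (g 0))))))) := by rw [r1]; group
    _ = g 1 * (g 1 * (g 2 * (g 0 * (g 1 * ((g 2)⁻¹ * (g 3 * (g 1))))))) := by rw [r0]; group
    _ = g 1 * (g 1 * (g 3 * (g 1 * (g 0 * (g 1))))) := by rw [r3]; group
    _ = g 1 * (g 1 * (g 0 * (g 0 * (g 1)))) := by rw [r0]; group

lemma sA20 : g 0 * (g 0 * (g 1 * (g 1 * (g 0 * (g 0))))) = g 1 := by
  calc g 0 * (g 0 * (g 1 * (g 1 * (g 0 * (g 0)))))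
    _ = g 0 * (g 0 * (g 2 * ((g 3)⁻¹ * (g 1 * (g 0 * (g 0)))))) := by rw [r2]; group
    _ = g 1 * ((g 2)⁻¹ * (g 1 * ((g 3)⁻¹ * (g 0 * (g 2 * (g 0 * (g 0))))))) := by rw [r1]; group
    _ = g 1 * ((g 2)⁻¹ * (g 1 * (g 1 * (g 2 * (g 0 * (g 0)))))) := by rw [r0]; group
    _ = g 1 * ((g 2)⁻¹ * (g 1 * (g 1 * (g 3 * ((g 2)⁻¹ * (g 3)))))) := by rw [r3]; group
    _ = g 1 := by rw [r2]; group

lemma sA21 : g 0 * (g 0 * (g 0 * (g 1 * (g 1 * (g 0))))) = g 1 * (g 0 * (g 0 * (g 1 * (g 1)))) := by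
  calc g 0 * (g 0 * (g 0 * (g 1 * (g 1 * (g 0)))))
    _ = g 0 * (g 0 * (g 0 * (g 1 * (g 2 * ((g 3)⁻¹ * (g 0)))))) := by rw [r2]; group
    _ = g 0 * (g 0 * ((g 2)⁻¹ * (g 3 * (g 1 * (g 2 * ((g 3)⁻¹ * (g 0))))))) := by rw [r3]; group
    _ = g 0 * (g 3 * (g 1 * ((g 2)⁻¹ * (g 0 * (g 2 * (g 1)))))) := by rw [r0]; group
    _ = g 0 * (g 2 * (g 0 * (g 1 * ((g 2)⁻¹ * (g 0 * (g 2 * (g 1))))))) := by rw [r3]; group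
    _ = g 1 * (g 0 * (g 0 * (g 1 * (g 1)))) := by rw [r1]; group

lemma sA22 : g 0 * (g 1 * (g 1 * (g 0 * (g 0 * (g 1))))) = g 1 * (g 0) := by
  calc g 0 * (g 1 * (g 1 * (g 0 * (g 0 * (g 1)))))
    _ = g 0 * (g 1 * (g 1 * (g 3 * (g 1 * (g 0 * (g 1)))))) := by rw [r0]; group
    _ = g 0 * (g 2 * ((g 3)⁻¹ * (g 2 * (g 1 * (g 0 * (g 1)))))) := by rw [r2]; group
    _ = g 0 * (g 2 * ((g 0)⁻¹ * (g 1 * ((g 2)⁻¹ * (g 3 * (g 1)))))) := by rw [r3]; group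
    _ = g 1 * (g 3 * (g 1)) := by rw [r1]; group
    _ = g 1 * (g 0) := by rw [r0]

lemma sA23 : g 0 * (g 1 * (g 0 * (g 0 * (g 1 * (g 1))))) = g 1 * (g 0 * (g 0 * (g 1))) := by
  calc g 0 * (g 1 * (g 0 * (g 0 * (g 1 * (g 1)))))
    _ = g 0 * (g 1 * (g 0 * ((g 2)⁻¹ * (g 3 * (g 1 * (g 1)))))) := by rw [r3]; group
    _ = g 0 * (g 1 * (g 3 * (g 1 * ((g 2)⁻¹ * (g 0 * (g 1)))))) := by rw [r0]; group
    _ = g 0 * (g 2 * (g 1 * ((g 2)⁻¹ * (g 0 * (g 1))))) := by rw [r2]; group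
    _ = g 1 * (g 0 * (g 0 * (g 1))) := by rw [r1]; group

lemma sB0 : g 1 * (1) = g 1 := by
  group

lemma sB1 : g 1 * (g 0) = g 1 * (g 0) := by
  group

lemma sB2 : g 1 * (g 1) = g 1 * (g 1) := by
  group

lemma sB3 : g 1 * (g 0 * (g 0)) = g 1 * (g 0 * (g 0)) := by
  group

lemma sB4 : g 1 * (g 1 * (g 0)) = g 1 * (g 1 * (g 0)) := by
  group

lemma sB5 : g 1 * (g 0 * (g 1)) = g 0 * (g 0) := by
  calc g 1 * (g 0 * (g 1))
    _ = g 1 * (g 0 * ((g 3)⁻¹ * (g 0))) := by rw [r0]; group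
    _ = g 0 * (g 2 * (g 0 * ((g 3)⁻¹ * (g 0)))) := by rw [r1]; group
    _ = g 0 * (g 0) := by rw [r3]; group

lemma sB6 : g 1 * (g 1 * (g 1)) = g 0 * (g 0 * (g 0)) := by
  calc g 1 * (g 1 * (g 1))
    _ = g 1 * ((g 3)⁻¹ * (g 0 * ((g 3)⁻¹ * (g 0)))) := by rw [r0]; group
    _ = g 1 * ((g 2)⁻¹ * (g 1 * (g 0 * ((g 3)⁻¹ * (g 0))))) := by rw [r2]; group
    _ = g 1 * ((g 2)⁻¹ * (g 1 * ((g 2)⁻¹ * (g 0)))) := by rw [r3]; group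
    _ = g 0 * (g 0 * (g 0)) := by rw [r1]; group

lemma sB7 : g 1 * (g 0 * (g 0 * (g 0))) = g 1 * (g 0 * (g 0 * (g 0))) := by
  group

lemma sB8 : g 1 * (g 1 * (g 0 * (g 0))) = g 1 * (g 1 * (g 0 * (g 0))) := by
  group

lemma sB9 : g 1 * (g 1 * (g 1 * (g 0))) = g 0 * (g 0 * (g 0 * (g 0))) := by
  calc g 1 * (g 1 * (g 1 * (g 0)))
    _ = g 0 * (g 2 * (g 0 * (g 2 * (g 1 * (g 0))))) := by rw [r1]; group
    _ = g 0 * (g 3 * (g 2 * (g 1 * (g 0)))) := by rw [r3]; group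
    _ = g 0 * (g 3 * (g 1 * (g 3 * (g 1 * (g 0))))) := by rw [r2]; group
    _ = g 0 * (g 0 * (g 0 * (g 0))) := by rw [r0]; group

lemma sB10 : g 1 * (g 0 * (g 0 * (g 1))) = g 1 * (g 0 * (g 0 * (g 1))) := by
  group

lemma sB11 : g 1 * (g 0 * (g 1 * (g 1))) = g 0 * (g 0 * (g 1)) := by
  calc g 1 * (g 0 * (g 1 * (g 1)))
    _ = g 1 * (g 0 * ((g 3)⁻¹ * (g 0 * (g 1)))) := by rw [r0]; group
    _ = g 1 * ((g 2)⁻¹ * (g 0 * (g 1))) := by rw [r3]; group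
    _ = g 0 * (g 0 * (g 1)) := by rw [r1]; group

lemma sB12 : g 1 * (g 0 * (g 0 * (g 0 * (g 0)))) = g 0 * (g 0 * (g 1 * (g 1))) := by
  calc g 1 * (g 0 * (g 0 * (g 0 * (g 0))))
    _ = g 0 * (g 2 * (g 0 * (g 1 * ((g 2)⁻¹ * (g 1 * ((g 2)⁻¹ * (g 0))))))) := by rw [r1]; group
    _ = g 0 * (g 3 * (g 1 * ((g 2)⁻¹ * (g 1 * (g 0 * ((g 3)⁻¹ * (g 0))))))) := by rw [r3]; group
    _ = g 0 * (g 0 * ((g 2)⁻¹ * (g 1 * (g 3 * (g 1 * (g 1)))))) := by rw [r0]; group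
    _ = g 0 * (g 0 * (g 1 * (g 1))) := by rw [r2]; group

lemma sB13 : g 1 * (g 1 * (g 0 * (g 0 * (g 0)))) = g 1 * (g 1 * (g 0 * (g 0 * (g 0)))) := by
  group

lemma sB14 : g 1 * (g 1 * (g 1 * (g 0 * (g 0)))) = g 0 * (g 0 * (g 0 * (g 0 * (g 0)))) := by
  calc g 1 * (g 1 * (g 1 * (g 0 * (g 0))))
    _ = g 0 * (g 2 * (g 0 * (g 2 * (g 1 * (g 0 * (g 0)))))) := by rw [r1]; group
    _ = g 0 * (g 3 * (g 2 * (g 1 * (g 0 * (g 0))))) := by rw [r3]; group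
    _ = g 0 * (g 3 * (g 2 * (g 1 * (g 0 * (g 3 * (g 1)))))) := by rw [r0]
    _ = g 0 * (g 0 * ((g 1)⁻¹ * (g 2 * ((g 3)⁻¹ * (g 0 * (g 0 * (g 0))))))) := by rw [r0]; group
    _ = g 0 * (g 0 * (g 0 * (g 0 * (g 0)))) := by rw [r2]; group

lemma sB15 : g 1 * (g 0 * (g 1 * (g 1 * (g 0)))) = g 0 * (g 1 * (g 1)) := by
  calc g 1 * (g 0 * (g 1 * (g 1 * (g 0))))
    _ = g 1 * (g 0 * ((g 3)⁻¹ * (g 0 * (g 1 * (g 3 * (g 1)))))) := by rw [r0]; group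
    _ = g 1 * ((g 2)⁻¹ * (g 0 * (g 1 * (g 3 * (g 1))))) := by rw [r3]; group
    _ = g 1 * ((g 2)⁻¹ * (g 0 * (g 2 * (g 1)))) := by rw [r2]; group
    _ = g 0 * (g 1 * (g 1)) := by rw [r1]; group

lemma sB16 : g 1 * (g 1 * (g 0 * (g 0 * (g 1)))) = g 1 * (g 1 * (g 0 * (g 0 * (g 1)))) := by
  group

lemma sB17 : g 1 * (g 0 * (g 0 * (g 1 * (g 1)))) = g 1 * (g 0 * (g 0 * (g 1 * (g 1)))) := by
  group

lemma sB18 : g 1 * (g 0 * (g 0 * (g 0 * (g 0 * (g 0))))) = g 0 * (g 0 * (g 1 * (g 1 * (g 0)))) := by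
  calc g 1 * (g 0 * (g 0 * (g 0 * (g 0 * (g 0)))))
    _ = g 0 * (g 2 * (g 0 * (g 1 * ((g 2)⁻¹ * (g 0 * (g 0 * (g 0))))))) := by rw [r1]; group
    _ = g 0 * (g 3 * (g 1 * (g 0 * ((g 3)⁻¹ * (g 0 * (g 0 * (g 0))))))) := by rw [r3]; group
    _ = g 3 * (g 1 * (g 3 * (g 1 * (g 3 * (g 1 * (g 1 * (g 3 * (g 1 * (g 3 * (g 1)))))))))) := by rw [r0]; group
    _ = g 3 * (g 1 * (g 3 * (g 1 * (g 3 * (g 1 * (g 2 * (g 1 * (g 3 * (g 1))))))))) := by rw [r2]; group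
    _ = g 0 * (g 0 * (g 0 * (g 2 * (g 1 * (g 0))))) := by rw [r0]; group
    _ = g 0 * (g 0 * (g 1 * (g 1 * (g 0)))) := by rw [r1]; group

lemma sB19 : g 1 * (g 1 * (g 1 * (g 0 * (g 0 * (g 0))))) = 1 := by
  calc g 1 * (g 1 * (g 1 * (g 0 * (g 0 * (g 0)))))
    _ = g 1 * (g 1 * (g 1 * (g 3 * (g 1 * (g 0 * (g 0)))))) := by rw [r0]; group
    _ = g 1 * (g 2 * ((g 3)⁻¹ * (g 2 * (g 1 * (g 0 * (g 0)))))) := by rw [r2]; group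
    _ = g 1 * (g 2 * ((g 0)⁻¹ * (g 1 * ((g 2)⁻¹ * (g 3 * ((g 2)⁻¹ * (g 3))))))) := by rw [r3]; group
    _ = g 1 * ((g 0)⁻¹ * (g 1 * (g 3 * ((g 2)⁻¹ * (g 3))))) := by rw [r1]; group
    _ = g 1 * ((g 0)⁻¹ * (g 3)) := by rw [r2]; group
    _ = 1 := by rw [r0]; group

lemma sB20 : g 1 * (g 0 * (g 1 * (g 1 * (g 0 * (g 0))))) = g 0 * (g 1 * (g 1 * (g 0))) := by
  calc g 1 * (g 0 * (g 1 * (g 1 * (g 0 * (g 0)))))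
    _ = g 1 * ((g 2)⁻¹ * (g 3 * (g 1 * (g 1 * (g 0 * (g 0)))))) := by rw [r3]; group
    _ = g 1 * ((g 2)⁻¹ * (g 0 * (g 1 * (g 3 * (g 1 * (g 0)))))) := by rw [r0]; group
    _ = g 1 * ((g 2)⁻¹ * (g 0 * (g 2 * (g 1 * (g 0))))) := by rw [r2]; group
    _ = g 0 * (g 1 * (g 1 * (g 0))) := by rw [r1]; group

lemma sB21 : g 1 * (g 0 * (g 0 * (g 1 * (g 1 * (g 0))))) = g 0 * (g 1) := by
  calc g 1 * (g 0 * (g 0 * (g 1 * (g 1 * (g 0)))))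
    _ = g 1 * (g 0 * (g 0 * (g 2 * ((g 3)⁻¹ * (g 2 * ((g 3)⁻¹ * (g 0))))))) := by rw [r2]; group
    _ = g 1 * ((g 2)⁻¹ * (g 3 * (g 0 * (g 2 * ((g 0)⁻¹ * ((g 3)⁻¹ * (g 0))))))) := by rw [r3]; group
    _ = g 0 * (g 3 * (g 1 * ((g 0)⁻¹ * ((g 3)⁻¹ * (g 1 * ((g 2)⁻¹)))))) := by rw [r1]; group
    _ = g 0 * (g 1 * ((g 0)⁻¹ * (g 1 * ((g 2)⁻¹)))) := by rw [r0]; group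
    _ = g 0 * (g 1) := by rw [r1]; group

lemma sB22 : g 1 * (g 1 * (g 1 * (g 0 * (g 0 * (g 1))))) = g 0 * (g 1 * (g 1 * (g 0 * (g 0)))) := by
  calc g 1 * (g 1 * (g 1 * (g 0 * (g 0 * (g 1)))))
    _ = g 1 * (g 1 * (g 2 * ((g 3)⁻¹ * (g 0 * (g 0 * (g 1)))))) := by rw [r2]; group
    _ = g 1 * (g 1 * (g 2 * ((g 3)⁻¹ * (g 0 * ((g 2)⁻¹ * (g 3 * (g 1))))))) := by rw [r3]; group
    _ = g 1 * ((g 3)⁻¹ * (g 0 * (g 2 * (g 1 * ((g 2)⁻¹ * (g 0)))))) := by rw [r0]; group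
    _ = g 0 * (g 2 * ((g 3)⁻¹ * (g 1 * (g 0 * (g 0))))) := by rw [r1]; group
    _ = g 0 * (g 1 * (g 1 * (g 0 * (g 0)))) := by rw [r2]; group

lemma sB23 : g 1 * (g 1 * (g 0 * (g 0 * (g 1 * (g 1))))) = g 0 := by
  calc g 1 * (g 1 * (g 0 * (g 0 * (g 1 * (g 1)))))
    _ = g 1 * (g 1 * (g 0 * ((g 2)⁻¹ * (g 3 * (g 1 * (g 1)))))) := by rw [r3]; group
    _ = g 1 * (g 1 * (g 3 * (g 1 * ((g 2)⁻¹ * (g 0 * ((g 3)⁻¹ * (g 0))))))) := by rw [r0]; group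
    _ = g 1 * (g 1 * (g 3 * (g 0 * (g 0 * ((g 3)⁻¹ * (g 0)))))) := by rw [r1]; group
    _ = g 1 * (g 1 * (g 3 * ((g 2)⁻¹ * (g 3 * ((g 2)⁻¹ * (g 0)))))) := by rw [r3]; group
    _ = g 0 := by rw [r2]; group

def L : List (Sieradski 4) := [1, g 0, g 1, g 0 * (g 0), g 1 * (g 0), g 0 * (g 1), g 1 * (g 1), g 0 * (g 0 * (g 0)), g 1 * (g 0 * (g 0)), g 1 * (g 1 * (g 0)), g 0 * (g 0 * (g 1)), g 0 * (g 1 * (g 1)), g 0 * (g 0 * (g 0 * (g 0))), g 1 * (g 0 * (g 0 * (g 0))), g 1 * (g 1 * (g 0 * (g 0))), g 0 * (g 1 * (g 1 * (g 0))), g 1 * (g 0 * (g 0 * (g 1))), g 0 * (g 0 * (g 1 * (g 1))), g 0 * (g 0 * (g 0 * (g 0 * (g 0)))), g 1 * (g 1 * (g 0 * (g 0 * (g 0)))), g 0 * (g 1 * (g 1 * (g 0 * (g 0)))), g 0 * (g 0 * (g 1 * (g 1 * (g 0)))), g 1 * (g 1 * (g 0 * (g 0 * (g 1)))), g 1 *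 (g 0 * (g 0 * (g 1 * (g 1))))]

lemma mem0 : (1 : Sieradski 4) ∈ L := by
  simp [L]

lemma mem1 : (g 0 : Sieradski 4) ∈ L := by
  simp [L]

lemma mem2 : (g 1 : Sieradski 4) ∈ L := by
  simp [L]

lemma mem3 : (g 0 * (g 0) : Sieradski 4) ∈ L := by
  simp [L]

lemma mem4 : (g 1 * (g 0) : Sieradski 4) ∈ L := by
  simp [L]

lemma mem5 : (g 0 * (g 1) : Sieradski 4) ∈ L := by
  simp [L]

lemma mem6 : (g 1 * (g 1) : Sieradski 4) ∈ L := by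
  simp [L]

lemma mem7 : (g 0 * (g 0 * (g 0)) : Sieradski 4) ∈ L := by
  simp [L]

lemma mem8 : (g 1 * (g 0 * (g 0)) : Sieradski 4) ∈ L := by
  simp [L]

lemma mem9 : (g 1 * (g 1 * (g 0)) : Sieradski 4) ∈ L := by
  simp [L]

lemma mem10 : (g 0 * (g 0 * (g 1)) : Sieradski 4) ∈ L := by
  simp [L]

lemma mem11 : (g 0 * (g 1 * (g 1)) : Sieradski 4) ∈ L := by
  simp [L]

lemma mem12 : (g 0 * (g 0 * (g 0 * (g 0))) : Sieradski 4) ∈ L := by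
  simp [L]

lemma mem13 : (g 1 * (g 0 * (g 0 * (g 0))) : Sieradski 4) ∈ L := by
  simp [L]

lemma mem14 : (g 1 * (g 1 * (g 0 * (g 0))) : Sieradski 4) ∈ L := by
  simp [L]

lemma mem15 : (g 0 * (g 1 * (g 1 * (g 0))) : Sieradski 4) ∈ L := by
  simp [L]

lemma mem16 : (g 1 * (g 0 * (g 0 * (g 1))) : Sieradski 4) ∈ L := by
  simp [L]

lemma mem17 : (g 0 * (g 0 * (g 1 * (g 1))) : Sieradski 4) ∈ L := by
  simp [L]

lemma mem18 : (g 0 * (g 0 * (g 0 * (g 0 * (g 0)))) : Sieradski 4) ∈ L := by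
  simp [L]

lemma mem19 : (g 1 * (g 1 * (g 0 * (g 0 * (g 0)))) : Sieradski 4) ∈ L := by
  simp [L]

lemma mem20 : (g 0 * (g 1 * (g 1 * (g 0 * (g 0)))) : Sieradski 4) ∈ L := by
  simp [L]

lemma mem21 : (g 0 * (g 0 * (g 1 * (g 1 * (g 0)))) : Sieradski 4) ∈ L := by
  simp [L]

lemma mem22 : (g 1 * (g 1 * (g 0 * (g 0 * (g 1)))) : Sieradski 4) ∈ L := by
  simp [L]

lemma mem23 : (g 1 * (g 0 * (g 0 * (g 1 * (g 1)))) : Sieradski 4) ∈ L := by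
  simp [L]

set_option maxHeartbeats 1000000 in
lemma hLa : ∀ w ∈ L, g 0 * w ∈ L := by
  intro w hw
  simp only [L, List.mem_cons, List.not_mem_nil, or_false] at hw
  rcases hw with rfl | rfl | rfl | rfl | rfl | rfl | rfl | rfl | rfl | rfl | rfl | rfl | rfl | rfl | rfl | rfl | rfl | rfl | rfl | rfl | rfl | rfl | rfl | rfl
  · rw [sA0]; exact mem1
  · rw [sA1]; exact mem3
  · rw [sA2]; exact mem5
  · rw [sA3]; exact mem7
  · rw [sA4]; exact mem6
  · rw [sA5]; exact mem10
  · rw [sA6]; exact mem11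
  · rw [sA7]; exact mem12
  · rw [sA8]; exact mem9
  · rw [sA9]; exact mem15
  · rw [sA10]; exact mem13
  · rw [sA11]; exact mem17
  · rw [sA12]; exact mem18
  · rw [sA13]; exact mem14
  · rw [sA14]; exact mem20
  · rw [sA15]; exact mem21
  · rw [sA16]; exact mem8
  · rw [sA17]; exact mem19
  · rw [sA18]; exact mem0
  · rw [sA19]; exact mem22
  · rw [sA20]; exact mem2
  · rw [sA21]; exact mem23
  · rw [sA22]; exact mem4
  · rw [sA23]; exact mem16

lemma iA0 : (g 0)⁻¹ * (1) = g 0 * (g 0 * (g 0 * (g 0 * (g 0)))) := by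
  calc (g 0)⁻¹ * (1)
    _ = (g 0)⁻¹ * (g 0 * (g 0 * (g 0 * (g 0 * (g 0 * (g 0)))))) := congrArg (fun z => (g 0)⁻¹ * z) sA18.symm
    _ = g 0 * (g 0 * (g 0 * (g 0 * (g 0)))) := by group

lemma iA1 : (g 0)⁻¹ * (g 0) = 1 := by
  calc (g 0)⁻¹ * (g 0)
    _ = (g 0)⁻¹ * (g 0 * (1)) := congrArg (fun z => (g 0)⁻¹ * z) sA0.symm
    _ = 1 := by group

lemma iA2 : (g 0)⁻¹ * (g 1) = g 0 * (g 1 * (g 1 * (g 0 * (g 0)))) := by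
  calc (g 0)⁻¹ * (g 1)
    _ = (g 0)⁻¹ * (g 0 * (g 0 * (g 1 * (g 1 * (g 0 * (g 0)))))) := congrArg (fun z => (g 0)⁻¹ * z) sA20.symm
    _ = g 0 * (g 1 * (g 1 * (g 0 * (g 0)))) := by group

lemma iA3 : (g 0)⁻¹ * (g 0 * (g 0)) = g 0 := by
  calc (g 0)⁻¹ * (g 0 * (g 0))
    _ = (g 0)⁻¹ * (g 0 * (g 0)) := congrArg (fun z => (g 0)⁻¹ * z) sA1.symm
    _ = g 0 := by group

lemma iA4 : (g 0)⁻¹ * (g 1 * (g 0)) = g 1 * (g 1 * (g 0 * (g 0 * (g 1)))) := by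
  calc (g 0)⁻¹ * (g 1 * (g 0))
    _ = (g 0)⁻¹ * (g 0 * (g 1 * (g 1 * (g 0 * (g 0 * (g 1)))))) := congrArg (fun z => (g 0)⁻¹ * z) sA22.symm
    _ = g 1 * (g 1 * (g 0 * (g 0 * (g 1)))) := by group

lemma iA5 : (g 0)⁻¹ * (g 0 * (g 1)) = g 1 := by
  calc (g 0)⁻¹ * (g 0 * (g 1))
    _ = (g 0)⁻¹ * (g 0 * (g 1)) := congrArg (fun z => (g 0)⁻¹ * z) sA2.symm
    _ = g 1 := by group

lemma iA6 : (g 0)⁻¹ * (g 1 * (g 1)) = g 1 * (g 0) := by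
  calc (g 0)⁻¹ * (g 1 * (g 1))
    _ = (g 0)⁻¹ * (g 0 * (g 1 * (g 0))) := congrArg (fun z => (g 0)⁻¹ * z) sA4.symm
    _ = g 1 * (g 0) := by group

lemma iA7 : (g 0)⁻¹ * (g 0 * (g 0 * (g 0))) = g 0 * (g 0) := by
  calc (g 0)⁻¹ * (g 0 * (g 0 * (g 0)))
    _ = (g 0)⁻¹ * (g 0 * (g 0 * (g 0))) := congrArg (fun z => (g 0)⁻¹ * z) sA3.symm
    _ = g 0 * (g 0) := by group

lemma iA8 : (g 0)⁻¹ * (g 1 * (g 0 * (g 0))) = g 1 * (g 0 * (g 0 * (g 1))) := by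
  calc (g 0)⁻¹ * (g 1 * (g 0 * (g 0)))
    _ = (g 0)⁻¹ * (g 0 * (g 1 * (g 0 * (g 0 * (g 1))))) := congrArg (fun z => (g 0)⁻¹ * z) sA16.symm
    _ = g 1 * (g 0 * (g 0 * (g 1))) := by group

lemma iA9 : (g 0)⁻¹ * (g 1 * (g 1 * (g 0))) = g 1 * (g 0 * (g 0)) := by
  calc (g 0)⁻¹ * (g 1 * (g 1 * (g 0)))
    _ = (g 0)⁻¹ * (g 0 * (g 1 * (g 0 * (g 0)))) := congrArg (fun z => (g 0)⁻¹ * z) sA8.symm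
    _ = g 1 * (g 0 * (g 0)) := by group

lemma iA10 : (g 0)⁻¹ * (g 0 * (g 0 * (g 1))) = g 0 * (g 1) := by
  calc (g 0)⁻¹ * (g 0 * (g 0 * (g 1)))
    _ = (g 0)⁻¹ * (g 0 * (g 0 * (g 1))) := congrArg (fun z => (g 0)⁻¹ * z) sA5.symm
    _ = g 0 * (g 1) := by group

lemma iA11 : (g 0)⁻¹ * (g 0 * (g 1 * (g 1))) = g 1 * (g 1) := by
  calc (g 0)⁻¹ * (g 0 * (g 1 * (g 1)))
    _ = (g 0)⁻¹ * (g 0 * (g 1 * (g 1))) := congrArg (fun z => (g 0)⁻¹ * z) sA6.symm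
    _ = g 1 * (g 1) := by group

lemma iA12 : (g 0)⁻¹ * (g 0 * (g 0 * (g 0 * (g 0)))) = g 0 * (g 0 * (g 0)) := by
  calc (g 0)⁻¹ * (g 0 * (g 0 * (g 0 * (g 0))))
    _ = (g 0)⁻¹ * (g 0 * (g 0 * (g 0 * (g 0)))) := congrArg (fun z => (g 0)⁻¹ * z) sA7.symm
    _ = g 0 * (g 0 * (g 0)) := by group

lemma iA13 : (g 0)⁻¹ * (g 1 * (g 0 * (g 0 * (g 0)))) = g 0 * (g 0 * (g 1)) := by
  calc (g 0)⁻¹ * (g 1 * (g 0 * (g 0 * (g 0))))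
    _ = (g 0)⁻¹ * (g 0 * (g 0 * (g 0 * (g 1)))) := congrArg (fun z => (g 0)⁻¹ * z) sA10.symm
    _ = g 0 * (g 0 * (g 1)) := by group

lemma iA14 : (g 0)⁻¹ * (g 1 * (g 1 * (g 0 * (g 0)))) = g 1 * (g 0 * (g 0 * (g 0))) := by
  calc (g 0)⁻¹ * (g 1 * (g 1 * (g 0 * (g 0))))
    _ = (g 0)⁻¹ * (g 0 * (g 1 * (g 0 * (g 0 * (g 0))))) := congrArg (fun z => (g 0)⁻¹ * z) sA13.symm
    _ = g 1 * (g 0 * (g 0 * (g 0))) := by group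

lemma iA15 : (g 0)⁻¹ * (g 0 * (g 1 * (g 1 * (g 0)))) = g 1 * (g 1 * (g 0)) := by
  calc (g 0)⁻¹ * (g 0 * (g 1 * (g 1 * (g 0))))
    _ = (g 0)⁻¹ * (g 0 * (g 1 * (g 1 * (g 0)))) := congrArg (fun z => (g 0)⁻¹ * z) sA9.symm
    _ = g 1 * (g 1 * (g 0)) := by group

lemma iA16 : (g 0)⁻¹ * (g 1 * (g 0 * (g 0 * (g 1)))) = g 1 * (g 0 * (g 0 * (g 1 * (g 1)))) := by
  calc (g 0)⁻¹ * (g 1 * (g 0 * (g 0 * (g 1))))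
    _ = (g 0)⁻¹ * (g 0 * (g 1 * (g 0 * (g 0 * (g 1 * (g 1)))))) := congrArg (fun z => (g 0)⁻¹ * z) sA23.symm
    _ = g 1 * (g 0 * (g 0 * (g 1 * (g 1)))) := by group

lemma iA17 : (g 0)⁻¹ * (g 0 * (g 0 * (g 1 * (g 1)))) = g 0 * (g 1 * (g 1)) := by
  calc (g 0)⁻¹ * (g 0 * (g 0 * (g 1 * (g 1))))
    _ = (g 0)⁻¹ * (g 0 * (g 0 * (g 1 * (g 1)))) := congrArg (fun z => (g 0)⁻¹ * z) sA11.symm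
    _ = g 0 * (g 1 * (g 1)) := by group

lemma iA18 : (g 0)⁻¹ * (g 0 * (g 0 * (g 0 * (g 0 * (g 0))))) = g 0 * (g 0 * (g 0 * (g 0))) := by
  calc (g 0)⁻¹ * (g 0 * (g 0 * (g 0 * (g 0 * (g 0)))))
    _ = (g 0)⁻¹ * (g 0 * (g 0 * (g 0 * (g 0 * (g 0))))) := congrArg (fun z => (g 0)⁻¹ * z) sA12.symm
    _ = g 0 * (g 0 * (g 0 * (g 0))) := by group

lemma iA19 : (g 0)⁻¹ * (g 1 * (g 1 * (g 0 * (g 0 * (g 0))))) = g 0 * (g 0 * (g 1 * (g 1))) := by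
  calc (g 0)⁻¹ * (g 1 * (g 1 * (g 0 * (g 0 * (g 0)))))
    _ = (g 0)⁻¹ * (g 0 * (g 0 * (g 0 * (g 1 * (g 1))))) := congrArg (fun z => (g 0)⁻¹ * z) sA17.symm
    _ = g 0 * (g 0 * (g 1 * (g 1))) := by group

lemma iA20 : (g 0)⁻¹ * (g 0 * (g 1 * (g 1 * (g 0 * (g 0))))) = g 1 * (g 1 * (g 0 * (g 0))) := by
  calc (g 0)⁻¹ * (g 0 * (g 1 * (g 1 * (g 0 * (g 0)))))
    _ = (g 0)⁻¹ * (g 0 * (g 1 * (g 1 * (g 0 * (g 0))))) := congrArg (fun z => (g 0)⁻¹ * z) sA14.symm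
    _ = g 1 * (g 1 * (g 0 * (g 0))) := by group

lemma iA21 : (g 0)⁻¹ * (g 0 * (g 0 * (g 1 * (g 1 * (g 0))))) = g 0 * (g 1 * (g 1 * (g 0))) := by
  calc (g 0)⁻¹ * (g 0 * (g 0 * (g 1 * (g 1 * (g 0)))))
    _ = (g 0)⁻¹ * (g 0 * (g 0 * (g 1 * (g 1 * (g 0))))) := congrArg (fun z => (g 0)⁻¹ * z) sA15.symm
    _ = g 0 * (g 1 * (g 1 * (g 0))) := by group

lemma iA22 : (g 0)⁻¹ * (g 1 * (g 1 * (g 0 * (g 0 * (g 1))))) = g 1 * (g 1 * (g 0 * (g 0 * (g 0)))) := by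
  calc (g 0)⁻¹ * (g 1 * (g 1 * (g 0 * (g 0 * (g 1)))))
    _ = (g 0)⁻¹ * (g 0 * (g 1 * (g 1 * (g 0 * (g 0 * (g 0)))))) := congrArg (fun z => (g 0)⁻¹ * z) sA19.symm
    _ = g 1 * (g 1 * (g 0 * (g 0 * (g 0)))) := by group

lemma iA23 : (g 0)⁻¹ * (g 1 * (g 0 * (g 0 * (g 1 * (g 1))))) = g 0 * (g 0 * (g 1 * (g 1 * (g 0)))) := by
  calc (g 0)⁻¹ * (g 1 * (g 0 * (g 0 * (g 1 * (g 1)))))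
    _ = (g 0)⁻¹ * (g 0 * (g 0 * (g 0 * (g 1 * (g 1 * (g 0)))))) := congrArg (fun z => (g 0)⁻¹ * z) sA21.symm
    _ = g 0 * (g 0 * (g 1 * (g 1 * (g 0)))) := by group

set_option maxHeartbeats 1000000 in
lemma hLainv : ∀ w ∈ L, (g 0)⁻¹ * w ∈ L := by
  intro w hw
  simp only [L, List.mem_cons, List.not_mem_nil, or_false] at hw
  rcases hw with rfl | rfl | rfl | rfl | rfl | rfl | rfl | rfl | rfl | rfl | rfl | rfl | rfl | rfl | rfl | rfl | rfl | rfl | rfl | rfl | rfl | rfl | rfl | rfl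
  · rw [iA0]; exact mem18
  · rw [iA1]; exact mem0
  · rw [iA2]; exact mem20
  · rw [iA3]; exact mem1
  · rw [iA4]; exact mem22
  · rw [iA5]; exact mem2
  · rw [iA6]; exact mem4
  · rw [iA7]; exact mem3
  · rw [iA8]; exact mem16
  · rw [iA9]; exact mem8
  · rw [iA10]; exact mem5
  · rw [iA11]; exact mem6
  · rw [iA12]; exact mem7
  · rw [iA13]; exact mem10
  · rw [iA14]; exact mem13
  · rw [iA15]; exact mem9
  · rw [iA16]; exact mem23
  · rw [iA17]; exact mem11
  · rw [iA18]; exact mem12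
  · rw [iA19]; exact mem17
  · rw [iA20]; exact mem14
  · rw [iA21]; exact mem15
  · rw [iA22]; exact mem19
  · rw [iA23]; exact mem21

set_option maxHeartbeats 1000000 in
lemma hLb : ∀ w ∈ L, g 1 * w ∈ L := by
  intro w hw
  simp only [L, List.mem_cons, List.not_mem_nil, or_false] at hw
  rcases hw with rfl | rfl | rfl | rfl | rfl | rfl | rfl | rfl | rfl | rfl | rfl | rfl | rfl | rfl | rfl | rfl | rfl | rfl | rfl | rfl | rfl | rfl | rfl | rfl
  · rw [sB0]; exact mem2
  · rw [sB1]; exact mem4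
  · rw [sB2]; exact mem6
  · rw [sB3]; exact mem8
  · rw [sB4]; exact mem9
  · rw [sB5]; exact mem3
  · rw [sB6]; exact mem7
  · rw [sB7]; exact mem13
  · rw [sB8]; exact mem14
  · rw [sB9]; exact mem12
  · rw [sB10]; exact mem16
  · rw [sB11]; exact mem10
  · rw [sB12]; exact mem17
  · rw [sB13]; exact mem19
  · rw [sB14]; exact mem18
  · rw [sB15]; exact mem11
  · rw [sB16]; exact mem22
  · rw [sB17]; exact mem23
  · rw [sB18]; exact mem21
  · rw [sB19]; exact mem0
  · rw [sB20]; exact mem15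
  · rw [sB21]; exact mem5
  · rw [sB22]; exact mem20
  · rw [sB23]; exact mem1

lemma iB0 : (g 1)⁻¹ * (1) = g 1 * (g 1 * (g 0 * (g 0 * (g 0)))) := by
  calc (g 1)⁻¹ * (1)
    _ = (g 1)⁻¹ * (g 1 * (g 1 * (g 1 * (g 0 * (g 0 * (g 0)))))) := congrArg (fun z => (g 1)⁻¹ * z) sB19.symm
    _ = g 1 * (g 1 * (g 0 * (g 0 * (g 0)))) := by group

lemma iB1 : (g 1)⁻¹ * (g 0) = g 1 * (g 0 * (g 0 * (g 1 * (g 1)))) := by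
  calc (g 1)⁻¹ * (g 0)
    _ = (g 1)⁻¹ * (g 1 * (g 1 * (g 0 * (g 0 * (g 1 * (g 1)))))) := congrArg (fun z => (g 1)⁻¹ * z) sB23.symm
    _ = g 1 * (g 0 * (g 0 * (g 1 * (g 1)))) := by group

lemma iB2 : (g 1)⁻¹ * (g 1) = 1 := by
  calc (g 1)⁻¹ * (g 1)
    _ = (g 1)⁻¹ * (g 1 * (1)) := congrArg (fun z => (g 1)⁻¹ * z) sB0.symm
    _ = 1 := by group

lemma iB3 : (g 1)⁻¹ * (g 0 * (g 0)) = g 0 * (g 1) := by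
  calc (g 1)⁻¹ * (g 0 * (g 0))
    _ = (g 1)⁻¹ * (g 1 * (g 0 * (g 1))) := congrArg (fun z => (g 1)⁻¹ * z) sB5.symm
    _ = g 0 * (g 1) := by group

lemma iB4 : (g 1)⁻¹ * (g 1 * (g 0)) = g 0 := by
  calc (g 1)⁻¹ * (g 1 * (g 0))
    _ = (g 1)⁻¹ * (g 1 * (g 0)) := congrArg (fun z => (g 1)⁻¹ * z) sB1.symm
    _ = g 0 := by group

lemma iB5 : (g 1)⁻¹ * (g 0 * (g 1)) = g 0 * (g 0 * (g 1 * (g 1 * (g 0)))) := by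
  calc (g 1)⁻¹ * (g 0 * (g 1))
    _ = (g 1)⁻¹ * (g 1 * (g 0 * (g 0 * (g 1 * (g 1 * (g 0)))))) := congrArg (fun z => (g 1)⁻¹ * z) sB21.symm
    _ = g 0 * (g 0 * (g 1 * (g 1 * (g 0)))) := by group

lemma iB6 : (g 1)⁻¹ * (g 1 * (g 1)) = g 1 := by
  calc (g 1)⁻¹ * (g 1 * (g 1))
    _ = (g 1)⁻¹ * (g 1 * (g 1)) := congrArg (fun z => (g 1)⁻¹ * z) sB2.symm
    _ = g 1 := by group

lemma iB7 : (g 1)⁻¹ * (g 0 * (g 0 * (g 0))) = g 1 * (g 1) := by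
  calc (g 1)⁻¹ * (g 0 * (g 0 * (g 0)))
    _ = (g 1)⁻¹ * (g 1 * (g 1 * (g 1))) := congrArg (fun z => (g 1)⁻¹ * z) sB6.symm
    _ = g 1 * (g 1) := by group

lemma iB8 : (g 1)⁻¹ * (g 1 * (g 0 * (g 0))) = g 0 * (g 0) := by
  calc (g 1)⁻¹ * (g 1 * (g 0 * (g 0)))
    _ = (g 1)⁻¹ * (g 1 * (g 0 * (g 0))) := congrArg (fun z => (g 1)⁻¹ * z) sB3.symm
    _ = g 0 * (g 0) := by group

lemma iB9 : (g 1)⁻¹ * (g 1 * (g 1 * (g 0))) = g 1 * (g 0) := by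
  calc (g 1)⁻¹ * (g 1 * (g 1 * (g 0)))
    _ = (g 1)⁻¹ * (g 1 * (g 1 * (g 0))) := congrArg (fun z => (g 1)⁻¹ * z) sB4.symm
    _ = g 1 * (g 0) := by group

lemma iB10 : (g 1)⁻¹ * (g 0 * (g 0 * (g 1))) = g 0 * (g 1 * (g 1)) := by
  calc (g 1)⁻¹ * (g 0 * (g 0 * (g 1)))
    _ = (g 1)⁻¹ * (g 1 * (g 0 * (g 1 * (g 1)))) := congrArg (fun z => (g 1)⁻¹ * z) sB11.symm
    _ = g 0 * (g 1 * (g 1)) := by group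

lemma iB11 : (g 1)⁻¹ * (g 0 * (g 1 * (g 1))) = g 0 * (g 1 * (g 1 * (g 0))) := by
  calc (g 1)⁻¹ * (g 0 * (g 1 * (g 1)))
    _ = (g 1)⁻¹ * (g 1 * (g 0 * (g 1 * (g 1 * (g 0))))) := congrArg (fun z => (g 1)⁻¹ * z) sB15.symm
    _ = g 0 * (g 1 * (g 1 * (g 0))) := by group

lemma iB12 : (g 1)⁻¹ * (g 0 * (g 0 * (g 0 * (g 0)))) = g 1 * (g 1 * (g 0)) := by
  calc (g 1)⁻¹ * (g 0 * (g 0 * (g 0 * (g 0))))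
    _ = (g 1)⁻¹ * (g 1 * (g 1 * (g 1 * (g 0)))) := congrArg (fun z => (g 1)⁻¹ * z) sB9.symm
    _ = g 1 * (g 1 * (g 0)) := by group

lemma iB13 : (g 1)⁻¹ * (g 1 * (g 0 * (g 0 * (g 0)))) = g 0 * (g 0 * (g 0)) := by
  calc (g 1)⁻¹ * (g 1 * (g 0 * (g 0 * (g 0))))
    _ = (g 1)⁻¹ * (g 1 * (g 0 * (g 0 * (g 0)))) := congrArg (fun z => (g 1)⁻¹ * z) sB7.symm
    _ = g 0 * (g 0 * (g 0)) := by group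

lemma iB14 : (g 1)⁻¹ * (g 1 * (g 1 * (g 0 * (g 0)))) = g 1 * (g 0 * (g 0)) := by
  calc (g 1)⁻¹ * (g 1 * (g 1 * (g 0 * (g 0))))
    _ = (g 1)⁻¹ * (g 1 * (g 1 * (g 0 * (g 0)))) := congrArg (fun z => (g 1)⁻¹ * z) sB8.symm
    _ = g 1 * (g 0 * (g 0)) := by group

lemma iB15 : (g 1)⁻¹ * (g 0 * (g 1 * (g 1 * (g 0)))) = g 0 * (g 1 * (g 1 * (g 0 * (g 0)))) := by
  calc (g 1)⁻¹ * (g 0 * (g 1 * (g 1 * (g 0))))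
    _ = (g 1)⁻¹ * (g 1 * (g 0 * (g 1 * (g 1 * (g 0 * (g 0)))))) := congrArg (fun z => (g 1)⁻¹ * z) sB20.symm
    _ = g 0 * (g 1 * (g 1 * (g 0 * (g 0)))) := by group

lemma iB16 : (g 1)⁻¹ * (g 1 * (g 0 * (g 0 * (g 1)))) = g 0 * (g 0 * (g 1)) := by
  calc (g 1)⁻¹ * (g 1 * (g 0 * (g 0 * (g 1))))
    _ = (g 1)⁻¹ * (g 1 * (g 0 * (g 0 * (g 1)))) := congrArg (fun z => (g 1)⁻¹ * z) sB10.symm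
    _ = g 0 * (g 0 * (g 1)) := by group

lemma iB17 : (g 1)⁻¹ * (g 0 * (g 0 * (g 1 * (g 1)))) = g 0 * (g 0 * (g 0 * (g 0))) := by
  calc (g 1)⁻¹ * (g 0 * (g 0 * (g 1 * (g 1))))
    _ = (g 1)⁻¹ * (g 1 * (g 0 * (g 0 * (g 0 * (g 0))))) := congrArg (fun z => (g 1)⁻¹ * z) sB12.symm
    _ = g 0 * (g 0 * (g 0 * (g 0))) := by group

lemma iB18 : (g 1)⁻¹ * (g 0 * (g 0 * (g 0 * (g 0 * (g 0))))) = g 1 * (g 1 * (g 0 * (g 0))) := by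
  calc (g 1)⁻¹ * (g 0 * (g 0 * (g 0 * (g 0 * (g 0)))))
    _ = (g 1)⁻¹ * (g 1 * (g 1 * (g 1 * (g 0 * (g 0))))) := congrArg (fun z => (g 1)⁻¹ * z) sB14.symm
    _ = g 1 * (g 1 * (g 0 * (g 0))) := by group

lemma iB19 : (g 1)⁻¹ * (g 1 * (g 1 * (g 0 * (g 0 * (g 0))))) = g 1 * (g 0 * (g 0 * (g 0))) := by
  calc (g 1)⁻¹ * (g 1 * (g 1 * (g 0 * (g 0 * (g 0)))))
    _ = (g 1)⁻¹ * (g 1 * (g 1 * (g 0 * (g 0 * (g 0))))) := congrArg (fun z => (g 1)⁻¹ * z) sB13.symm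
    _ = g 1 * (g 0 * (g 0 * (g 0))) := by group

lemma iB20 : (g 1)⁻¹ * (g 0 * (g 1 * (g 1 * (g 0 * (g 0))))) = g 1 * (g 1 * (g 0 * (g 0 * (g 1)))) := by
  calc (g 1)⁻¹ * (g 0 * (g 1 * (g 1 * (g 0 * (g 0)))))
    _ = (g 1)⁻¹ * (g 1 * (g 1 * (g 1 * (g 0 * (g 0 * (g 1)))))) := congrArg (fun z => (g 1)⁻¹ * z) sB22.symm
    _ = g 1 * (g 1 * (g 0 * (g 0 * (g 1)))) := by group

lemma iB21 : (g 1)⁻¹ * (g 0 * (g 0 * (g 1 * (g 1 * (g 0))))) = g 0 * (g 0 * (g 0 * (g 0 * (g 0)))) := by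
  calc (g 1)⁻¹ * (g 0 * (g 0 * (g 1 * (g 1 * (g 0)))))
    _ = (g 1)⁻¹ * (g 1 * (g 0 * (g 0 * (g 0 * (g 0 * (g 0)))))) := congrArg (fun z => (g 1)⁻¹ * z) sB18.symm
    _ = g 0 * (g 0 * (g 0 * (g 0 * (g 0)))) := by group

lemma iB22 : (g 1)⁻¹ * (g 1 * (g 1 * (g 0 * (g 0 * (g 1))))) = g 1 * (g 0 * (g 0 * (g 1))) := by
  calc (g 1)⁻¹ * (g 1 * (g 1 * (g 0 * (g 0 * (g 1)))))
    _ = (g 1)⁻¹ * (g 1 * (g 1 * (g 0 * (g 0 * (g 1))))) := congrArg (fun z => (g 1)⁻¹ * z) sB16.symm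
    _ = g 1 * (g 0 * (g 0 * (g 1))) := by group

lemma iB23 : (g 1)⁻¹ * (g 1 * (g 0 * (g 0 * (g 1 * (g 1))))) = g 0 * (g 0 * (g 1 * (g 1))) := by
  calc (g 1)⁻¹ * (g 1 * (g 0 * (g 0 * (g 1 * (g 1)))))
    _ = (g 1)⁻¹ * (g 1 * (g 0 * (g 0 * (g 1 * (g 1))))) := congrArg (fun z => (g 1)⁻¹ * z) sB17.symm
    _ = g 0 * (g 0 * (g 1 * (g 1))) := by group

set_option maxHeartbeats 1000000 in
lemma hLbinv : ∀ w ∈ L, (g 1)⁻¹ * w ∈ L := by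
  intro w hw
  simp only [L, List.mem_cons, List.not_mem_nil, or_false] at hw
  rcases hw with rfl | rfl | rfl | rfl | rfl | rfl | rfl | rfl | rfl | rfl | rfl | rfl | rfl | rfl | rfl | rfl | rfl | rfl | rfl | rfl | rfl | rfl | rfl | rfl
  · rw [iB0]; exact mem19
  · rw [iB1]; exact mem23
  · rw [iB2]; exact mem0
  · rw [iB3]; exact mem5
  · rw [iB4]; exact mem1
  · rw [iB5]; exact mem21
  · rw [iB6]; exact mem2
  · rw [iB7]; exact mem6
  · rw [iB8]; exact mem3
  · rw [iB9]; exact mem4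
  · rw [iB10]; exact mem11
  · rw [iB11]; exact mem15
  · rw [iB12]; exact mem9
  · rw [iB13]; exact mem7
  · rw [iB14]; exact mem8
  · rw [iB15]; exact mem20
  · rw [iB16]; exact mem10
  · rw [iB17]; exact mem12
  · rw [iB18]; exact mem14
  · rw [iB19]; exact mem13
  · rw [iB20]; exact mem22
  · rw [iB21]; exact mem18
  · rw [iB22]; exact mem16
  · rw [iB23]; exact mem17

lemma all_mem : ∀ x : Sieradski 4, x ∈ L := by
  have key : ∀ y : Sieradski 4,
      y ∈ Submonoid.closure (({g 0, g 1} ∪ ({g 0, g 1} : Set (Sieradski 4))⁻¹)) →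
      ∀ w ∈ L, y * w ∈ L := by
    intro y hy
    refine Submonoid.closure_induction (motive := fun x _ => ∀ w ∈ L, x * w ∈ L) ?_ ?_ ?_ hy
    · rintro x hx
      simp only [Set.mem_union, Set.mem_insert_iff, Set.mem_singleton_iff, Set.mem_inv] at hx
      rcases hx with (rfl | rfl) | (h | h)
      · exact hLa
      · exact hLb
      · obtain rfl : x = (g 0)⁻¹ := inv_eq_iff_eq_inv.mp h
        exact hLainv
      · obtain rfl : x = (g 1)⁻¹ := inv_eq_iff_eq_inv.mp h
        exact hLbinv
    · intro w hw; simpa using hw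
    · intro x y _ _ hx hy w hw
      rw [mul_assoc]; exact hx _ (hy w hw)
  intro x
  have hx : x ∈ Subgroup.closure ({g 0, g 1} : Set (Sieradski 4)) := by
    rw [htop]; trivial
  have hx' : x ∈ Submonoid.closure (({g 0, g 1} ∪ ({g 0, g 1} : Set (Sieradski 4))⁻¹)) := by
    rw [← Subgroup.closure_toSubmonoid]; exact hx
  have := key x hx' 1 mem0
  simpa using this

instance : DecidableEq SL2 := fun A B => decidable_of_iff (A.1 = B.1) Subtype.ext_iff.symm

def M0 : SL2 := (⟨!![0, 1; 2, 1], by decide⟩ : SL2)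
def M1 : SL2 := (⟨!![0, 2; 1, 1], by decide⟩ : SL2)
def M2 : SL2 := (⟨!![2, 1; 0, 2], by decide⟩ : SL2)
def M3 : SL2 := (⟨!![2, 0; 1, 2], by decide⟩ : SL2)

def Amap : ZMod 4 → SL2 := fun i =>
  if i = 0 then M0 else if i = 1 then M1 else if i = 2 then M2 else M3

lemma hA : ∀ r ∈ sieradskiRels 4, FreeGroup.lift Amap r = 1 := by
  rintro r ⟨i, rfl⟩
  simp only [map_mul, map_inv, FreeGroup.lift_apply_of]
  rw [mul_inv_eq_one]
  revert i
  decide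

def φ : Sieradski 4 →* SL2 := PresentedGroup.toGroup hA

lemma phi_g (i : ZMod 4) : φ (g i) = Amap i := PresentedGroup.toGroup.of hA

lemma phiW0 : φ (1) = (⟨!![1, 0; 0, 1], by decide⟩ : SL2) := by
  rw [map_one]; exact Subtype.ext (by decide)

lemma phiW1 : φ (g 0) = (⟨!![0, 1; 2, 1], by decide⟩ : SL2) := by
  simp only [map_mul, phi_g]; exact Subtype.ext (by decide)

lemma phiW2 : φ (g 1) = (⟨!![0, 2; 1, 1], by decide⟩ : SL2) := by
  simp only [map_mul, phi_g]; exact Subtype.ext (by decide)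

lemma phiW3 : φ (g 0 * (g 0)) = (⟨!![2, 1; 2, 0], by decide⟩ : SL2) := by
  simp only [map_mul, phi_g]; exact Subtype.ext (by decide)

lemma phiW4 : φ (g 1 * (g 0)) = (⟨!![1, 2; 2, 2], by decide⟩ : SL2) := by
  simp only [map_mul, phi_g]; exact Subtype.ext (by decide)

lemma phiW5 : φ (g 0 * (g 1)) = (⟨!![1, 1; 1, 2], by decide⟩ : SL2) := by
  simp only [map_mul, phi_g]; exact Subtype.ext (by decide)

lemma phiW6 : φ (g 1 * (g 1)) = (⟨!![2, 2; 1, 0], by decide⟩ : SL2) := by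
  simp only [map_mul, phi_g]; exact Subtype.ext (by decide)

lemma phiW7 : φ (g 0 * (g 0 * (g 0))) = (⟨!![2, 0; 0, 2], by decide⟩ : SL2) := by
  simp only [map_mul, phi_g]; exact Subtype.ext (by decide)

lemma phiW8 : φ (g 1 * (g 0 * (g 0))) = (⟨!![1, 0; 1, 1], by decide⟩ : SL2) := by
  simp only [map_mul, phi_g]; exact Subtype.ext (by decide)

lemma phiW9 : φ (g 1 * (g 1 * (g 0))) = (⟨!![1, 1; 0, 1], by decide⟩ : SL2) := by
  simp only [map_mul, phi_g]; exact Subtype.ext (by decide)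

lemma phiW10 : φ (g 0 * (g 0 * (g 1))) = (⟨!![1, 2; 0, 1], by decide⟩ : SL2) := by
  simp only [map_mul, phi_g]; exact Subtype.ext (by decide)

lemma phiW11 : φ (g 0 * (g 1 * (g 1))) = (⟨!![1, 0; 2, 1], by decide⟩ : SL2) := by
  simp only [map_mul, phi_g]; exact Subtype.ext (by decide)

lemma phiW12 : φ (g 0 * (g 0 * (g 0 * (g 0)))) = (⟨!![0, 2; 1, 2], by decide⟩ : SL2) := by
  simp only [map_mul, phi_g]; exact Subtype.ext (by decide)

lemma phiW13 : φ (g 1 * (g 0 * (g 0 * (g 0)))) = (⟨!![0, 1; 2, 2], by decide⟩ : SL2) := by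
  simp only [map_mul, phi_g]; exact Subtype.ext (by decide)

lemma phiW14 : φ (g 1 * (g 1 * (g 0 * (g 0)))) = (⟨!![2, 2; 2, 1], by decide⟩ : SL2) := by
  simp only [map_mul, phi_g]; exact Subtype.ext (by decide)

lemma phiW15 : φ (g 0 * (g 1 * (g 1 * (g 0)))) = (⟨!![0, 1; 2, 0], by decide⟩ : SL2) := by
  simp only [map_mul, phi_g]; exact Subtype.ext (by decide)

lemma phiW16 : φ (g 1 * (g 0 * (g 0 * (g 1)))) = (⟨!![0, 2; 1, 0], by decide⟩ : SL2) := by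
  simp only [map_mul, phi_g]; exact Subtype.ext (by decide)

lemma phiW17 : φ (g 0 * (g 0 * (g 1 * (g 1)))) = (⟨!![2, 1; 1, 1], by decide⟩ : SL2) := by
  simp only [map_mul, phi_g]; exact Subtype.ext (by decide)

lemma phiW18 : φ (g 0 * (g 0 * (g 0 * (g 0 * (g 0))))) = (⟨!![1, 2; 1, 0], by decide⟩ : SL2) := by
  simp only [map_mul, phi_g]; exact Subtype.ext (by decide)

lemma phiW19 : φ (g 1 * (g 1 * (g 0 * (g 0 * (g 0))))) = (⟨!![1, 1; 2, 0], by decide⟩ : SL2) := by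
  simp only [map_mul, phi_g]; exact Subtype.ext (by decide)

lemma phiW20 : φ (g 0 * (g 1 * (g 1 * (g 0 * (g 0))))) = (⟨!![2, 1; 0, 2], by decide⟩ : SL2) := by
  simp only [map_mul, phi_g]; exact Subtype.ext (by decide)

lemma phiW21 : φ (g 0 * (g 0 * (g 1 * (g 1 * (g 0))))) = (⟨!![2, 0; 2, 2], by decide⟩ : SL2) := by
  simp only [map_mul, phi_g]; exact Subtype.ext (by decide)

lemma phiW22 : φ (g 1 * (g 1 * (g 0 * (g 0 * (g 1))))) = (⟨!![2, 0; 1, 2], by decide⟩ : SL2) := by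
  simp only [map_mul, phi_g]; exact Subtype.ext (by decide)

lemma phiW23 : φ (g 1 * (g 0 * (g 0 * (g 1 * (g 1))))) = (⟨!![2, 2; 0, 2], by decide⟩ : SL2) := by
  simp only [map_mul, phi_g]; exact Subtype.ext (by decide)

lemma hsurj : Function.Surjective φ := by
  intro m
  have h24 : ∀ x : SL2, x = (⟨!![1, 0; 0, 1], by decide⟩ : SL2) ∨ x = (⟨!![0, 1; 2, 1], by decide⟩ : SL2) ∨ x = (⟨!![0, 2; 1, 1], by decide⟩ : SL2) ∨ x = (⟨!![2, 1; 2, 0], by decide⟩ : SL2) ∨ x = (⟨!![1, 2; 2, 2], by decide⟩ : SL2) ∨ x = (⟨!![1, 1; 1, 2], by decide⟩ : SL2) ∨ x = (⟨!![2, 2; 1, 0], by decide⟩ : SL2) ∨ x = (⟨!![2, 0; 0, 2], by decide⟩ : SL2) ∨ x = (⟨!![1, 0; 1, 1], by decide⟩ : SL2) ∨ x = (⟨!![1, 1; 0, 1], by decide⟩ : SL2) ∨ x = (⟨!![1, 2; 0, 1], by decide⟩ : SL2) ∨ x = (⟨!![1, 0; 2, 1], by decide⟩ : SL2) ∨ x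 = (⟨!![0, 2; 1, 2], by decide⟩ : SL2) ∨ x = (⟨!![0, 1; 2, 2], by decide⟩ : SL2) ∨ x = (⟨!![2, 2; 2, 1], by decide⟩ : SL2) ∨ x = (⟨!![0, 1; 2, 0], by decide⟩ : SL2) ∨ x = (⟨!![0, 2; 1, 0], by decide⟩ : SL2) ∨ x = (⟨!![2, 1; 1, 1], by decide⟩ : SL2) ∨ x = (⟨!![1, 2; 1, 0], by decide⟩ : SL2) ∨ x = (⟨!![1, 1; 2, 0], by decide⟩ : SL2) ∨ x = (⟨!![2, 1; 0, 2], by decide⟩ : SL2) ∨ x = (⟨!![2, 0; 2, 2], by decide⟩ : SL2) ∨ x = (⟨!![2, 0; 1, 2], by decide⟩ : SL2) ∨ x = (⟨!![2, 2; 0, 2], by decide⟩ : SL2) := by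
    delta SL2 Matrix.SpecialLinearGroup
    set_option synthInstance.maxSize 4096 in set_option synthInstance.maxHeartbeats 400000 in exact @of_decide_eq_true _ (@Fintype.decidableForallFintype _ _ (fun _ => inferInstance) (inferInstanceAs (Fintype SL2))) (by rfl)
  rcases h24 m with rfl | rfl | rfl | rfl | rfl | rfl | rfl | rfl | rfl | rfl | rfl | rfl | rfl | rfl | rfl | rfl | rfl | rfl | rfl | rfl | rfl | rfl | rfl | rfl
  · exact ⟨1, phiW0⟩
  · exact ⟨g 0, phiW1⟩
  · exact ⟨g 1, phiW2⟩
  · exact ⟨g 0 * (g 0), phiW3⟩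
  · exact ⟨g 1 * (g 0), phiW4⟩
  · exact ⟨g 0 * (g 1), phiW5⟩
  · exact ⟨g 1 * (g 1), phiW6⟩
  · exact ⟨g 0 * (g 0 * (g 0)), phiW7⟩
  · exact ⟨g 1 * (g 0 * (g 0)), phiW8⟩
  · exact ⟨g 1 * (g 1 * (g 0)), phiW9⟩
  · exact ⟨g 0 * (g 0 * (g 1)), phiW10⟩
  · exact ⟨g 0 * (g 1 * (g 1)), phiW11⟩
  · exact ⟨g 0 * (g 0 * (g 0 * (g 0))), phiW12⟩
  · exact ⟨g 1 * (g 0 * (g 0 * (g 0))), phiW13⟩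
  · exact ⟨g 1 * (g 1 * (g 0 * (g 0))), phiW14⟩
  · exact ⟨g 0 * (g 1 * (g 1 * (g 0))), phiW15⟩
  · exact ⟨g 1 * (g 0 * (g 0 * (g 1))), phiW16⟩
  · exact ⟨g 0 * (g 0 * (g 1 * (g 1))), phiW17⟩
  · exact ⟨g 0 * (g 0 * (g 0 * (g 0 * (g 0)))), phiW18⟩
  · exact ⟨g 1 * (g 1 * (g 0 * (g 0 * (g 0)))), phiW19⟩
  · exact ⟨g 0 * (g 1 * (g 1 * (g 0 * (g 0)))), phiW20⟩
  · exact ⟨g 0 * (g 0 * (g 1 * (g 1 * (g 0)))), phiW21⟩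
  · exact ⟨g 1 * (g 1 * (g 0 * (g 0 * (g 1)))), phiW22⟩
  · exact ⟨g 1 * (g 0 * (g 0 * (g 1 * (g 1)))), phiW23⟩

lemma hget : Function.Surjective (fun i : Fin L.length => L.get i) := by
  intro x
  obtain ⟨n, hn⟩ := List.mem_iff_get.1 (all_mem x)
  exact ⟨n, hn⟩

lemma hfin : Finite (Sieradski 4) := Finite.of_surjective _ hget

lemma hcard : Nat.card (Sieradski 4) = Nat.card SL2 := by
  have h1 : Nat.card (Sieradski 4) ≤ 24 := by
    have h := Nat.card_le_card_of_surjective _ hget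
    simpa [L] using h
  have := hfin
  have h2 : Nat.card SL2 ≤ Nat.card (Sieradski 4) :=
    Nat.card_le_card_of_surjective φ hsurj
  have h3 : Nat.card SL2 = 24 := by
    rw [Nat.card_eq_fintype_card]
    decide
  omega

end SierAux

/-- S(4) is isomorphic to SL₂(ℤ/3). -/
theorem sieradski_four_iso_SL2_Z3 :
    Nonempty (Sieradski 4 ≃* Matrix.SpecialLinearGroup (Fin 2) (ZMod 3)) := by
  have := SierAux.hfin
  exact ⟨MulEquiv.ofBijective SierAux.φ
    ((Nat.bijective_iff_surjective_and_card SierAux.φ).2 ⟨SierAux.hsurj, SierAux.hcard⟩)⟩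
end

section
/- The abelianization of the Sieradski group S(6) = ⟨g₁,…,g₆ ∣ gᵢ = gᵢ₋₁·gᵢ₊₁, indices mod 6⟩ is infinite; in particular S(6) is an infinite group. -/
/-- Period-6 weights for a homomorphism S(6) → ℤ. -/
def sierWt : ZMod 6 → Multiplicative ℤ :=
  fun i => Multiplicative.ofAdd (![1, 1, 0, -1, -1, 0] i)

lemma sierWt_rel : ∀ r ∈ sieradskiRels 6, FreeGroup.lift sierWt r = 1 := by
  rintro r ⟨i, rfl⟩
  simp only [map_mul, map_inv, FreeGroup.lift_apply_of, mul_inv_eq_one]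
  revert i
  decide

/-- The induced homomorphism. -/
def sierHom : Sieradski 6 →* Multiplicative ℤ :=
  PresentedGroup.toGroup sierWt_rel

lemma sierHom_surj : Function.Surjective sierHom := by
  have h1 : sierHom (PresentedGroup.of (0 : ZMod 6)) = Multiplicative.ofAdd 1 := by
    simp [sierHom, PresentedGroup.toGroup.of, sierWt]
  intro z
  refine ⟨(PresentedGroup.of (0 : ZMod 6)) ^ (Multiplicative.toAdd z), ?_⟩
  rw [map_zpow, h1]
  rcases z with z
  simp [← ofAdd_zsmul]

/-- The abelianization of S(6) is infinite; in particular S(6) is infinite. -/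
theorem sieradski_six_infinite :
    Infinite (Abelianization (Sieradski 6)) ∧ Infinite (Sieradski 6) := by
  have hs := sierHom_surj
  have hab : Function.Surjective (Abelianization.lift sierHom) := by
    intro z
    obtain ⟨g, hg⟩ := hs z
    exact ⟨Abelianization.of g, by simp [hg]⟩
  exact ⟨Infinite.of_surjective _ hab, Infinite.of_surjective _ hs⟩
end

section
/- The assignment m ↦ (1 2 3 4), c ↦ (1 2) defines a group homomorphism from the trefoil group ⟨m, c ∣ m·c·m = c·m⁻¹·c⟩ to S₄ whose image acts transitively on {1,2,3,4} and is not cyclic. -/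
def trefoilF : Fin 2 → Equiv.Perm (Fin 4) := ![finRotate 4, Equiv.swap 0 1]

lemma trefoil_rel_holds : ∀ r ∈ trefoilRels, FreeGroup.lift trefoilF r = 1 := by
  intro r hr
  simp only [trefoilRels, Set.mem_singleton_iff] at hr
  subst hr
  simp only [map_mul, map_inv, FreeGroup.lift_apply_of, trefoilF]
  decide

/-- `m ↦ (1 2 3 4)`, `c ↦ (1 2)` defines a homomorphism of the trefoil group
to S₄ whose image is transitive and not cyclic. -/
theorem trefoil_locally_cyclic_monodromy :
    ∃ φ : PresentedGroup trefoilRels →* Equiv.Perm (Fin 4),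
      φ (PresentedGroup.of 0) = finRotate 4 ∧
      φ (PresentedGroup.of 1) = Equiv.swap 0 1 ∧
      (∀ i j : Fin 4, ∃ g ∈ φ.range, g i = j) ∧
      ¬ IsCyclic φ.range := by
  refine ⟨PresentedGroup.toGroup trefoil_rel_holds, ?_, ?_, ?_, ?_⟩
  · exact PresentedGroup.toGroup.of trefoil_rel_holds
  · exact PresentedGroup.toGroup.of trefoil_rel_holds
  · intro i j
    have h : ∀ i j : Fin 4, ∃ k : Fin 4, ((finRotate 4) ^ (k : ℕ)) i = j := by decide
    obtain ⟨k, hk⟩ := h i j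
    refine ⟨(finRotate 4) ^ (k : ℕ), ⟨(PresentedGroup.of 0) ^ (k : ℕ), ?_⟩, hk⟩
    rw [map_pow, PresentedGroup.toGroup.of]
    rfl
  · intro h
    set φ := PresentedGroup.toGroup trefoil_rel_holds
    have h0 : finRotate 4 ∈ φ.range := ⟨PresentedGroup.of 0, PresentedGroup.toGroup.of trefoil_rel_holds⟩
    have h1 : Equiv.swap 0 1 ∈ φ.range := ⟨PresentedGroup.of 1, PresentedGroup.toGroup.of trefoil_rel_holds⟩
    haveI := h
    have h2 := congrArg Subtype.val
      ((IsCyclic.commGroup (α := φ.range)).mul_comm ⟨finRotate 4, h0⟩ ⟨Equiv.swap 0 1, h1⟩)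
    simp only [Subgroup.coe_mul] at h2
    have hne : finRotate 4 * Equiv.swap 0 1 ≠ Equiv.swap 0 1 * finRotate 4 := by decide
    exact hne h2
end
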